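/- arXiv:2512.13162 — 8 statements merged into one kernel-verified Lean document; each statement's English description precedes it below -/
import Mathlib

section
/- Let u and v be positive integers with u ≥ v ≥ 2. Define u_1 = ⌈u/2⌉, u_i = ⌈⌊u/2^{i−1}⌋/2⌉ for i = 2, …, v−1, and u_v = ⌊u/2^{v−1}⌋. Then for every i ∈ {1, …, v−1}, either u_i = Σ_{j=i+1}^{v} u_j or u_i = Σ_{j=i+1}^{v} u_j + 1. -/
/-- Proposition (ii) on the auxiliary function Ψ(u,v): each entry equals the sum of the
later entries, or that sum plus one. -/
theorem psi_tail_sum (u v : ℕ) (hv : 2 ≤ v) (huv : v ≤ u) (f : ℕ → ℕ)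
    (h1 : f 1 = (u + 1) / 2)
    (hmid : ∀ i, 2 ≤ i → i ≤ v - 1 → f i = (u / 2 ^ (i - 1) + 1) / 2)
    (hlast : f v = u / 2 ^ (v - 1)) :
    ∀ i, 1 ≤ i → i ≤ v - 1 →
      f i = (∑ j ∈ Finset.Icc (i + 1) v, f j) ∨
      f i = (∑ j ∈ Finset.Icc (i + 1) v, f j) + 1 := by
  have key : ∀ d k, k + d = v - 1 → 1 ≤ k →
      ∑ j ∈ Finset.Icc (k + 1) v, f j = u / 2 ^ k := by
    intro d
    induction d with
    | zero =>
      intro k hk hk1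
      have hkv : k + 1 = v := by omega
      have hk2 : k = v - 1 := by omega
      rw [hkv, Finset.Icc_self, Finset.sum_singleton, hlast, hk2]
    | succ d ih =>
      intro k hk hk1
      have hk1v : k + 1 ≤ v - 1 := by omega
      have hins : Finset.Icc (k + 1) v = insert (k + 1) (Finset.Icc (k + 2) v) := by
        ext x
        simp only [Finset.mem_Icc, Finset.mem_insert]
        omega
      rw [hins, Finset.sum_insert (by simp), ih (k + 1) (by omega) (by omega)]
      have hf : f (k + 1) = (u / 2 ^ k + 1) / 2 := by
        have := hmid (k + 1) (by omega) hk1v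
        simpa using this
      have hdiv : u / 2 ^ (k + 1) = u / 2 ^ k / 2 := by
        rw [pow_succ, Nat.div_div_eq_div_mul]
      rw [hf, hdiv]
      omega
  intro i hi hiv
  have hsum : ∑ j ∈ Finset.Icc (i + 1) v, f j = u / 2 ^ i :=
    key (v - 1 - i) i (by omega) hi
  have hfi : f i = (u / 2 ^ (i - 1) + 1) / 2 := by
    rcases Nat.eq_or_lt_of_le hi with h | h
    · subst h
      simpa using h1
    · exact hmid i h hiv
  have hdiv : u / 2 ^ i = u / 2 ^ (i - 1) / 2 := by
    have : 2 ^ i = 2 ^ (i - 1) * 2 := by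
      rw [← pow_succ]
      congr 1
      omega
    rw [this, ← Nat.div_div_eq_div_mul]
  rw [hsum, hfi, hdiv]
  omega
end

section
/- Let q be a prime power and let k, n, m be integers with 1 < k < n ≤ m. Set s = max{⌊n/2^{k−1}⌋, 1}. Then there exists an [n,k]_{q^m/q} rank-metric code C whose weight spectrum is exactly WS(C) = {s, s+1, …, n}; in particular, C has precisely n − s + 1 distinct nonzero rank weights. -/
/-- The rank weight of a vector `v ∈ L^n`, where `L/K` is a field extension:
the `K`-dimension of the `K`-span of the entries of `v`. -/
noncomputable def rankWeight (K : Type*) [Field K] {L : Type*} [Field L] [Algebra K L]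
    {n : ℕ} (v : Fin n → L) : ℕ :=
  Module.finrank K (Submodule.span K (Set.range v))

/-- The weight spectrum of a rank-metric code `C ⊆ L^n`: the set of rank weights of its
nonzero codewords. -/
noncomputable def weightSpectrum (K : Type*) [Field K] {L : Type*} [Field L] [Algebra K L]
    {n : ℕ} (C : Submodule L (Fin n → L)) : Set ℕ :=
  {w | ∃ c ∈ C, c ≠ 0 ∧ rankWeight K c = w}

/-- A rank-metric code `C ⊆ L^n` is nondegenerate if for every nonzero `x ∈ K^n` there is a
codeword `c ∈ C` with `∑ j, x j • c j ≠ 0`. -/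
def IsNondegenerate (K : Type*) [Field K] {L : Type*} [Field L] [Algebra K L]
    {n : ℕ} (C : Submodule L (Fin n → L)) : Prop :=
  ∀ x : Fin n → K, x ≠ 0 → ∃ c ∈ C, (∑ j, x j • c j) ≠ 0

set_option linter.unusedSectionVars false
set_option linter.unusedVariables false
set_option maxHeartbeats 1000000

open Submodule Module Set

namespace RankSpectrumAux

/-- halving sequence: `tau N j = max (N / 2^j) 1`. -/
def tau (N j : ℕ) : ℕ := max (N / 2 ^ j) 1

lemma tau_zero {N : ℕ} (h : 1 ≤ N) : tau N 0 = N := by simp [tau]; omega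

lemma tau_pos (N j : ℕ) : 1 ≤ tau N j := le_max_right _ _

lemma tau_le {N : ℕ} (h : 1 ≤ N) (j : ℕ) : tau N j ≤ N := by
  have := Nat.div_le_self N (2 ^ j)
  simp only [tau]; omega

lemma tau_anti {N j j' : ℕ} (h : j ≤ j') : tau N j' ≤ tau N j := by
  have : N / 2 ^ j' ≤ N / 2 ^ j :=
    Nat.div_le_div_left (Nat.pow_le_pow_right (by norm_num) h) (Nat.pow_pos (by norm_num))
  simp only [tau]; omega

lemma div_succ_eq (N j : ℕ) : N / 2 ^ (j + 1) = N / 2 ^ j / 2 := by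
  rw [Nat.div_div_eq_div_mul, pow_succ]

/-- Lemma A : if `tau N j ≥ 2` then `tau N j + j ≤ N`. -/
lemma tau_add_le {N : ℕ} : ∀ j, 2 ≤ tau N j → tau N j + j ≤ N := by
  intro j
  induction j with
  | zero =>
    intro h
    have := Nat.div_le_self N 1
    simp only [tau, pow_zero] at *
    omega
  | succ j ih =>
    intro h
    have hd := div_succ_eq N j
    have h2 : 2 ≤ N / 2 ^ (j + 1) := by simp only [tau] at h; omega
    have h2' : 2 ≤ tau N j := by simp only [tau]; omega
    have := ih h2'
    simp only [tau] at *
    omega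

/-- Lemma D : `tau N j ≤ 2 * tau N (j+1) + 1`. -/
lemma tau_le_two_succ (N j : ℕ) : tau N j ≤ 2 * tau N (j + 1) + 1 := by
  have hd := div_succ_eq N j
  simp only [tau] at *
  omega

/-- if `N / 2^j ≥ 2` then `2 * tau N (j+1) ≤ tau N j`. -/
lemma two_tau_succ_le {N j : ℕ} (h : 2 ≤ N / 2 ^ j) : 2 * tau N (j + 1) ≤ tau N j := by
  have hd := div_succ_eq N j
  simp only [tau] at *
  omega

lemma two_le_div {N j jj : ℕ} (h : j + 1 ≤ jj) (hN : 2 ^ jj ≤ N) : 2 ≤ N / 2 ^ j := by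
  have h1 : 2 ^ (j + 1) ≤ N := le_trans (Nat.pow_le_pow_right (by norm_num) h) hN
  rw [Nat.le_div_iff_mul_le (Nat.pow_pos (by norm_num))]
  rw [pow_succ] at h1
  omega

lemma pow_add_le (a d : ℕ) : 2 ^ a + d ≤ 2 ^ (a + d) := by
  induction d with
  | zero => simp
  | succ d ih =>
    have h1 : 1 ≤ 2 ^ (a + d) := Nat.one_le_two_pow
    have h2 : 2 ^ (a + (d + 1)) = 2 * 2 ^ (a + d) := by rw [← add_assoc, pow_succ]; ring
    omega


section LinAlg

variable {K L : Type} [Field K] [Field L] [Algebra K L] [FiniteDimensional K L]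
variable {θ : L} {M : ℕ}

/-- Independence of a consecutive block of powers of `θ`. -/
lemma li_pows (hθ : LinearIndependent K (fun i : Fin M => θ ^ (i : ℕ)))
    (a b : ℕ) (hab : a + b ≤ M) :
    LinearIndependent K (fun l : Fin b => θ ^ (a + (l : ℕ))) := by
  have := hθ.comp (fun l : Fin b => (⟨a + (l : ℕ), by omega⟩ : Fin M))
    (fun l l' h => by
      simp only [Fin.mk.injEq] at h
      exact Fin.ext (by omega))
  exact this

lemma li_pows_smul (hθ : LinearIndependent K (fun i : Fin M => θ ^ (i : ℕ)))
    {lam : L} (hlam : lam ≠ 0) (a b : ℕ) (hab : a + b ≤ M) :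
    LinearIndependent K (fun l : Fin b => lam * θ ^ (a + (l : ℕ))) := by
  have h1 := (li_pows hθ a b hab).map' (LinearMap.mulLeft K lam)
    (LinearMap.ker_eq_bot.mpr (mul_right_injective₀ hlam))
  exact h1

lemma finrank_span_pows (hθ : LinearIndependent K (fun i : Fin M => θ ^ (i : ℕ)))
    (a b : ℕ) (hab : a + b ≤ M) :
    finrank K (span K (Set.range (fun l : Fin b => θ ^ (a + (l : ℕ))))) = b := by
  rw [finrank_span_eq_card (li_pows hθ a b hab), Fintype.card_fin]

lemma span_range_eq {n b : ℕ} (c : Fin n → L) (d : Fin b → L)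
    (h1 : ∀ i, c i ∈ span K (Set.range d)) (h2 : ∀ l, d l ∈ span K (Set.range c)) :
    span K (Set.range c) = span K (Set.range d) := by
  apply le_antisymm
  · rw [span_le]; rintro x ⟨i, rfl⟩; exact h1 i
  · rw [span_le]; rintro x ⟨l, rfl⟩; exact h2 l

lemma theta_ne_zero (hθ : LinearIndependent K (fun i : Fin M => θ ^ (i : ℕ)))
    (hM : 2 ≤ M) : θ ≠ 0 := by
  intro h
  have := hθ.ne_zero ⟨1, by omega⟩
  simp [h] at this

end LinAlg

section Construction

open RankSpectrumAux

variable {K L : Type} [Field K] [Field L] [Algebra K L] [FiniteDimensional K L]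

/-- the generators of the code. -/
def gvec (θ : L) (N' K' : ℕ) (n k : ℕ) (j : Fin k) (i : Fin n) : L :=
  if (j : ℕ) < K' then
    (if (i : ℕ) < tau N' (j : ℕ) then θ ^ ((i : ℕ) + (j : ℕ)) else 0)
  else (if (i : ℕ) = N' + ((j : ℕ) - K') then θ ^ (i : ℕ) else 0)

/-- a codeword given by coefficients `lam`. -/
def cmb (θ : L) (N' K' : ℕ) {n k : ℕ} (lam : Fin k → L) : Fin n → L :=
  fun i => ∑ j, lam j * gvec θ N' K' n k j i

lemma cmb_eq_sum_smul (θ : L) (N' K' : ℕ) {n k : ℕ} (lam : Fin k → L) :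
    (∑ j, lam j • gvec θ N' K' n k j) = cmb θ N' K' lam := by
  funext i
  simp [cmb, Finset.sum_apply]


end Construction

section Weights

variable {K L : Type} [Field K] [Field L] [Algebra K L] [FiniteDimensional K L]
variable {θ : L} {M n k K' N' : ℕ}

/-- weight of a pure generator `g_j`, `j < K'`. -/
lemma weight_pure (hθ : LinearIndependent K (fun i : Fin M => θ ^ (i : ℕ)))
    (hnM : n ≤ M) (hkn : k < n) (hK1 : 1 ≤ K') (hKk : K' ≤ k)
    (hNn : N' + (k - K') = n) (hN2 : 2 ^ (K' - 1) ≤ N')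
    (j : Fin k) (hj : (j : ℕ) < K') :
    finrank K (span K (Set.range (gvec θ N' K' n k j))) = tau N' (j : ℕ) := by
  have hN1 : 1 ≤ N' := le_trans Nat.one_le_two_pow hN2
  have hNle : N' ≤ n := by omega
  have hexp : tau N' (j : ℕ) + (j : ℕ) ≤ M := by
    by_cases h2 : 2 ≤ tau N' (j : ℕ)
    · have := tau_add_le (N := N') (j : ℕ) h2
      omega
    · have h1 := tau_pos N' (j : ℕ)
      have : (j : ℕ) < k := j.isLt
      omega
  have hspan : span K (Set.range (gvec θ N' K' n k j))
      = span K (Set.range (fun l : Fin (tau N' (j : ℕ)) => θ ^ ((j : ℕ) + (l : ℕ)))) := by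
    apply span_range_eq
    · intro i
      rw [gvec, if_pos hj]
      by_cases hi : (i : ℕ) < tau N' (j : ℕ)
      · rw [if_pos hi]
        have : θ ^ ((i : ℕ) + (j : ℕ)) = (fun l : Fin (tau N' (j : ℕ)) => θ ^ ((j : ℕ) + (l : ℕ))) ⟨(i : ℕ), hi⟩ := by
          simp only []
          congr 1
          omega
        rw [this]
        exact subset_span (Set.mem_range_self _)
      · rw [if_neg hi]; exact zero_mem _
    · intro l
      have hl : (l : ℕ) < n := by
        have := l.isLt
        have := tau_le hN1 (j : ℕ)
        omega
      have : θ ^ ((j : ℕ) + (l : ℕ)) = gvec θ N' K' n k j ⟨(l : ℕ), hl⟩ := by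
        rw [gvec, if_pos hj]
        simp only []
        rw [if_pos l.isLt]
        congr 1
        omega
      rw [this]
      exact subset_span (Set.mem_range_self _)
  rw [hspan, finrank_span_pows hθ (j : ℕ) (tau N' (j : ℕ)) (by omega)]

lemma sum_two {k : ℕ} (f : Fin k → L) {a b : Fin k} (hab : a ≠ b) (x y : L) :
    ∑ j', (if j' = a then x else if j' = b then y else 0) * f j' = x * f a + y * f b := by
  have h : ∀ j' : Fin k, (if j' = a then x else if j' = b then y else 0) * f j'
      = (if j' = a then x * f j' else 0) + (if j' = b then y * f j' else 0) := by
    intro j'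
    by_cases h1 : j' = a
    · subst h1
      simp [hab, Ne.symm hab]
    · by_cases h2 : j' = b <;> simp [h1, h2, Ne.symm hab]
  rw [Finset.sum_congr rfl (fun j' _ => h j'), Finset.sum_add_distrib,
    Finset.sum_ite_eq' Finset.univ a (fun j' => x * f j'),
    Finset.sum_ite_eq' Finset.univ b (fun j' => y * f j')]
  simp

/-- weight of the `w`-twisted codeword in block `j`. -/
lemma weight_w (hθ : LinearIndependent K (fun i : Fin M => θ ^ (i : ℕ)))
    (hnM : n ≤ M) (hkn : k < n) (hK1 : 1 ≤ K') (hKk : K' ≤ k)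
    (hNn : N' + (k - K') = n) (hN2 : 2 ^ (K' - 1) ≤ N')
    (j w : ℕ) (hj1 : 1 ≤ j) (hjK : j < K')
    (hw1 : 1 ≤ w) (hwt : w ≤ tau N' j) (hwT : tau N' j + w ≤ tau N' (j - 1))
    (hT2 : 2 ≤ tau N' (j - 1)) :
    ∃ lam : Fin k → L,
      finrank K (span K (Set.range (cmb θ N' K' (n := n) lam))) = tau N' (j - 1) - w := by
  classical
  have hN1 : 1 ≤ N' := le_trans Nat.one_le_two_pow hN2
  have hNle : N' ≤ n := by omega
  have hθ0 : θ ≠ 0 := theta_ne_zero hθ (by omega)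
  have hTle : tau N' (j - 1) ≤ N' := tau_le hN1 _
  have hTM : tau N' (j - 1) + (j - 1) ≤ N' := tau_add_le _ hT2
  have hja' : j - 1 < k := by omega
  have hjb' : j < k := by omega
  set ja : Fin k := ⟨j - 1, hja'⟩ with hja
  set jb : Fin k := ⟨j, hjb'⟩ with hjb
  have hjav : (ja : ℕ) = j - 1 := rfl
  have hjbv : (jb : ℕ) = j := rfl
  have hab : ja ≠ jb := by
    intro h
    have : (ja : ℕ) = (jb : ℕ) := by rw [h]
    rw [hjav, hjbv] at this
    omega
  set μ : L := -((1 + θ ^ w) * θ⁻¹) with hμ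
  set lam : Fin k → L := fun j' => if j' = ja then 1 else if j' = jb then μ else 0 with hlam
  refine ⟨lam, ?_⟩
  have hcval : ∀ i : Fin n, cmb θ N' K' lam i =
      (if (i : ℕ) < tau N' j then -θ ^ ((i : ℕ) + (j - 1) + w)
        else if (i : ℕ) < tau N' (j - 1) then θ ^ ((i : ℕ) + (j - 1)) else 0) := by
    intro i
    rw [cmb]
    rw [sum_two (fun j' => gvec θ N' K' n k j' i) hab 1 μ]
    have hga : gvec θ N' K' n k ja i
        = (if (i : ℕ) < tau N' (j - 1) then θ ^ ((i : ℕ) + (j - 1)) else 0) := by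
      rw [gvec, if_pos (show ((ja : ℕ) < K') by rw [hjav]; omega), hjav]
    have hgb : gvec θ N' K' n k jb i
        = (if (i : ℕ) < tau N' j then θ ^ ((i : ℕ) + j) else 0) := by
      rw [gvec, if_pos (show ((jb : ℕ) < K') by rw [hjbv]; omega), hjbv]
    rw [hga, hgb]
    by_cases hi1 : (i : ℕ) < tau N' j
    · have hi2 : (i : ℕ) < tau N' (j - 1) := by omega
      rw [if_pos hi1, if_pos hi2, if_pos hi1]
      have he : (i : ℕ) + j = ((i : ℕ) + (j - 1)) + 1 := by omega
      rw [he, pow_succ, hμ, pow_add]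
      field_simp
      ring
    · rw [if_neg hi1, if_neg hi1, mul_zero, add_zero, one_mul]
  set d : Fin (tau N' (j - 1) - w) → L := fun l => θ ^ ((w + (j - 1)) + (l : ℕ)) with hd
  have hspan : span K (Set.range (cmb θ N' K' (n := n) lam)) = span K (Set.range d) := by
    apply span_range_eq
    · intro i
      rw [hcval i]
      by_cases hi1 : (i : ℕ) < tau N' j
      · rw [if_pos hi1]
        have hlt : (i : ℕ) < tau N' (j - 1) - w := by omega
        have hde : θ ^ ((i : ℕ) + (j - 1) + w) = d ⟨(i : ℕ), hlt⟩ := by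
          rw [hd]
          simp only []
          congr 1
          omega
        rw [hde, ← neg_one_smul K (d ⟨(i : ℕ), hlt⟩)]
        exact smul_mem _ _ (subset_span (Set.mem_range_self _))
      · rw [if_neg hi1]
        by_cases hi2 : (i : ℕ) < tau N' (j - 1)
        · rw [if_pos hi2]
          have hlt : (i : ℕ) - w < tau N' (j - 1) - w := by omega
          have hde : θ ^ ((i : ℕ) + (j - 1)) = d ⟨(i : ℕ) - w, hlt⟩ := by
            rw [hd]
            simp only []
            congr 1
            omega
          rw [hde]
          exact subset_span (Set.mem_range_self _)
        · rw [if_neg hi2]; exact zero_mem _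
    · intro l
      have hlb := l.isLt
      by_cases hl : (l : ℕ) < tau N' j
      · have hli : (l : ℕ) < n := by omega
        have hval := hcval ⟨(l : ℕ), hli⟩
        simp only [if_pos hl] at hval
        have hde : d l = (-1 : K) • cmb θ N' K' lam ⟨(l : ℕ), hli⟩ := by
          rw [hval, neg_one_smul, neg_neg, hd]
          simp only []
          congr 1
          omega
        rw [hde]
        exact smul_mem _ _ (subset_span (Set.mem_range_self _))
      · have hlw : (l : ℕ) + w < tau N' (j - 1) := by omega
        have hli : (l : ℕ) + w < n := by omega
        have hval := hcval ⟨(l : ℕ) + w, hli⟩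
        have h1 : ¬ ((l : ℕ) + w < tau N' j) := by omega
        rw [if_neg h1, if_pos (show (l : ℕ) + w < tau N' (j - 1) by omega)] at hval
        have hde : d l = cmb θ N' K' lam ⟨(l : ℕ) + w, hli⟩ := by
          rw [hval, hd]
          simp only []
          congr 1
          omega
        rw [hde]
        exact subset_span (Set.mem_range_self _)
  rw [hspan, hd, finrank_span_pows hθ (w + (j - 1)) (tau N' (j - 1) - w) (by omega)]


/-- weight of the tail codeword `g_0 + ∑_{K' ≤ j < K'+r} g_j`. -/
lemma weight_tail (hθ : LinearIndependent K (fun i : Fin M => θ ^ (i : ℕ)))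
    (hnM : n ≤ M) (hkn : k < n) (hK1 : 1 ≤ K') (hKk : K' ≤ k)
    (hNn : N' + (k - K') = n) (hN2 : 2 ^ (K' - 1) ≤ N')
    (r : ℕ) (hr1 : 1 ≤ r) (hrk : r ≤ k - K') :
    ∃ lam : Fin k → L,
      finrank K (span K (Set.range (cmb θ N' K' (n := n) lam))) = N' + r := by
  classical
  have hN1 : 1 ≤ N' := le_trans Nat.one_le_two_pow hN2
  have hNle : N' ≤ n := by omega
  have hNr : N' + r ≤ n := by omega
  have hk1 : 0 < k := by omega
  have htz : tau N' 0 = N' := tau_zero hN1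
  set lam : Fin k → L :=
    fun j' => if (j' : ℕ) = 0 ∨ (K' ≤ (j' : ℕ) ∧ (j' : ℕ) < K' + r) then 1 else 0 with hlam
  refine ⟨lam, ?_⟩
  have hcval : ∀ i : Fin n, cmb θ N' K' lam i =
      (if (i : ℕ) < N' + r then θ ^ (i : ℕ) else 0) := by
    intro i
    rw [cmb]
    by_cases hi : (i : ℕ) < N'
    · rw [Finset.sum_eq_single (⟨0, hk1⟩ : Fin k)]
      · have hl : lam ⟨0, hk1⟩ = 1 := if_pos (Or.inl rfl)
        have hg : gvec θ N' K' n k ⟨0, hk1⟩ i = θ ^ (i : ℕ) := by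
          rw [gvec]
          simp only [Fin.val_mk]
          rw [if_pos (by omega : (0 : ℕ) < K'), htz, if_pos hi, add_zero]
        rw [hl, hg, one_mul, if_pos (by omega)]
      · intro b _ hb
        by_cases hbK : (b : ℕ) < K'
        · have hb0 : (b : ℕ) ≠ 0 := by
            intro h
            exact hb (Fin.ext (by simpa using h))
          have : lam b = 0 := if_neg (by push_neg; exact ⟨hb0, fun h => absurd h (by omega)⟩)
          rw [this, zero_mul]
        · have : gvec θ N' K' n k b i = 0 := by
            rw [gvec, if_neg hbK, if_neg (by omega)]
          rw [this, mul_zero]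
      · intro h
        exact absurd (Finset.mem_univ _) h
    · by_cases hi2 : (i : ℕ) < N' + r
      · have hjt : K' + ((i : ℕ) - N') < k := by omega
        set jt : Fin k := ⟨K' + ((i : ℕ) - N'), hjt⟩ with hjtd
        have hjtv : (jt : ℕ) = K' + ((i : ℕ) - N') := rfl
        rw [Finset.sum_eq_single jt]
        · have hl : lam jt = 1 := if_pos (Or.inr (by rw [hjtv]; omega))
          have hg : gvec θ N' K' n k jt i = θ ^ (i : ℕ) := by
            rw [gvec, if_neg (by rw [hjtv]; omega), if_pos (by rw [hjtv]; omega)]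
          rw [hl, hg, one_mul, if_pos hi2]
        · intro b _ hb
          by_cases hbK : (b : ℕ) < K'
          · have : gvec θ N' K' n k b i = 0 := by
              have := tau_le hN1 (b : ℕ)
              rw [gvec, if_pos hbK, if_neg (by omega)]
            rw [this, mul_zero]
          · by_cases hbsel : (b : ℕ) < K' + r
            · have : gvec θ N' K' n k b i = 0 := by
                rw [gvec, if_neg hbK, if_neg ?_]
                intro h
                have hbv : (b : ℕ) = K' + ((i : ℕ) - N') := by omega
                exact hb (Fin.ext (hbv.trans hjtv.symm))
              rw [this, mul_zero]
            · have : lam b = 0 := if_neg (by push_neg; exact ⟨by omega, fun _ => by omega⟩)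
              rw [this, zero_mul]
        · intro h
          exact absurd (Finset.mem_univ _) h
      · rw [if_neg hi2, Finset.sum_eq_zero]
        intro b _
        by_cases hbK : (b : ℕ) < K'
        · have : gvec θ N' K' n k b i = 0 := by
            have := tau_le hN1 (b : ℕ)
            rw [gvec, if_pos hbK, if_neg (by omega)]
          rw [this, mul_zero]
        · by_cases hbsel : (b : ℕ) < K' + r
          · have : gvec θ N' K' n k b i = 0 := by
              rw [gvec, if_neg hbK, if_neg (by omega)]
            rw [this, mul_zero]
          · have : lam b = 0 := if_neg (by push_neg; exact ⟨by omega, fun _ => by omega⟩)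
            rw [this, zero_mul]
  set d : Fin (N' + r) → L := fun l => θ ^ ((0 : ℕ) + (l : ℕ)) with hd
  have hspan : span K (Set.range (cmb θ N' K' (n := n) lam)) = span K (Set.range d) := by
    apply span_range_eq
    · intro i
      rw [hcval i]
      by_cases hi : (i : ℕ) < N' + r
      · rw [if_pos hi]
        have hde : θ ^ (i : ℕ) = d ⟨(i : ℕ), hi⟩ := by
          rw [hd]
          simp only []
          congr 1
          omega
        rw [hde]
        exact subset_span (Set.mem_range_self _)
      · rw [if_neg hi]; exact zero_mem _
    · intro l
      have hlb := l.isLt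
      have hli : (l : ℕ) < n := by omega
      have hde : d l = cmb θ N' K' lam ⟨(l : ℕ), hli⟩ := by
        rw [hcval ⟨(l : ℕ), hli⟩, hd]
        simp only []
        rw [if_pos (show ((⟨(l : ℕ), hli⟩ : Fin n) : ℕ) < N' + r from by
          simp only [Fin.val_mk]; omega)]
        congr 1
        omega
      rw [hde]
      exact subset_span (Set.mem_range_self _)
  rw [hspan, hd, finrank_span_pows hθ 0 (N' + r) (by omega)]

/-- every nonzero codeword has weight at least `tau N' (K'-1)`. -/
lemma key_lb (hθ : LinearIndependent K (fun i : Fin M => θ ^ (i : ℕ)))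
    (hnM : n ≤ M) (hkn : k < n) (hK1 : 1 ≤ K') (hKk : K' ≤ k)
    (hNn : N' + (k - K') = n) (hN2 : 2 ^ (K' - 1) ≤ N')
    (hs1 : K' < k → tau N' (K' - 1) = 1)
    (lam : Fin k → L) (hlam : lam ≠ 0) :
    tau N' (K' - 1) ≤ finrank K (span K (Set.range (cmb θ N' K' (n := n) lam))) := by
  classical
  have hN1 : 1 ≤ N' := le_trans Nat.one_le_two_pow hN2
  have hNle : N' ≤ n := by omega
  have hθ0 : θ ≠ 0 := theta_ne_zero hθ (by omega)
  set S : Finset (Fin k) := Finset.univ.filter (fun j => lam j ≠ 0) with hSd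
  have hS : S.Nonempty := by
    rcases Function.ne_iff.mp hlam with ⟨j, hj⟩
    exact ⟨j, Finset.mem_filter.mpr ⟨Finset.mem_univ _, hj⟩⟩
  set j0 : Fin k := S.min' hS with hj0d
  have hj0 : lam j0 ≠ 0 := (Finset.mem_filter.mp (S.min'_mem hS)).2
  have hzero : ∀ j : Fin k, (j : ℕ) < (j0 : ℕ) → lam j = 0 := by
    intro j hj
    by_contra h
    have hjS : j ∈ S := by simp [hSd, h]
    have := S.min'_le j hjS
    rw [← hj0d] at this
    have := Fin.lt_def.mpr hj
    omega
  by_cases hA : (j0 : ℕ) < K'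
  · -- active case
    obtain ⟨lo, hlo1, hlo3, hlos⟩ :
        ∃ lo : ℕ, lo ≤ tau N' (j0 : ℕ) ∧
          (∀ b : Fin k, (b : ℕ) < K' → (j0 : ℕ) < (b : ℕ) → tau N' (b : ℕ) ≤ lo) ∧
          tau N' (K' - 1) ≤ tau N' (j0 : ℕ) - lo := by
      by_cases hc : (j0 : ℕ) + 1 < K'
      · refine ⟨tau N' ((j0 : ℕ) + 1), tau_anti (by omega), ?_, ?_⟩
        · intro b h1 h2
          exact tau_anti (by omega)
        · have h2d : 2 ≤ N' / 2 ^ (j0 : ℕ) := two_le_div (by omega) hN2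
          have h2t := two_tau_succ_le h2d
          have hanti : tau N' (K' - 1) ≤ tau N' ((j0 : ℕ) + 1) := tau_anti (by omega)
          omega
      · refine ⟨0, Nat.zero_le _, ?_, ?_⟩
        · intro b h1 h2
          omega
        · have hj0e : (j0 : ℕ) = K' - 1 := by omega
          rw [hj0e]
          omega
    have hlo2 : lo ≤ N' := le_trans hlo1 (tau_le hN1 _)
    have htj0 : tau N' (j0 : ℕ) ≤ N' := tau_le hN1 _
    have hval : ∀ i : Fin n, lo ≤ (i : ℕ) → (i : ℕ) < tau N' (j0 : ℕ) →
        cmb θ N' K' lam i = lam j0 * θ ^ ((i : ℕ) + (j0 : ℕ)) := by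
      intro i h1 h2
      rw [cmb, Finset.sum_eq_single j0]
      · rw [gvec, if_pos hA, if_pos h2]
      · intro b _ hb
        rcases lt_or_gt_of_ne (fun h : (b : ℕ) = (j0 : ℕ) => hb (Fin.ext h)) with hlt | hgt
        · rw [hzero b hlt, zero_mul]
        · by_cases hbK : (b : ℕ) < K'
          · have hle := hlo3 b hbK hgt
            have : gvec θ N' K' n k b i = 0 := by
              rw [gvec, if_pos hbK, if_neg (by omega)]
            rw [this, mul_zero]
          · have : gvec θ N' K' n k b i = 0 := by
              rw [gvec, if_neg hbK, if_neg (by omega)]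
            rw [this, mul_zero]
      · intro h
        exact absurd (Finset.mem_univ _) h
    have hexp : (lo + (j0 : ℕ)) + (tau N' (j0 : ℕ) - lo) ≤ M := by
      by_cases h2 : 2 ≤ tau N' (j0 : ℕ)
      · have := tau_add_le (N := N') (j0 : ℕ) h2
        omega
      · have := tau_pos N' (j0 : ℕ)
        have : (j0 : ℕ) < k := j0.isLt
        omega
    set d : Fin (tau N' (j0 : ℕ) - lo) → L :=
      fun l => lam j0 * θ ^ ((lo + (j0 : ℕ)) + (l : ℕ)) with hd
    have hdli : LinearIndependent K d := li_pows_smul hθ hj0 _ _ hexp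
    have hsub : span K (Set.range d) ≤ span K (Set.range (cmb θ N' K' (n := n) lam)) := by
      rw [span_le]
      rintro x ⟨l, rfl⟩
      have hlb := l.isLt
      have hli : lo + (l : ℕ) < n := by omega
      have : d l = cmb θ N' K' lam ⟨lo + (l : ℕ), hli⟩ := by
        rw [hval ⟨lo + (l : ℕ), hli⟩ (by simp only [Fin.val_mk]; omega)
          (by simp only [Fin.val_mk]; omega), hd]
        simp only [Fin.val_mk]
        congr 2
        omega
      rw [this]
      exact subset_span (Set.mem_range_self _)
    have hrk : finrank K (span K (Set.range d)) = tau N' (j0 : ℕ) - lo := by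
      rw [finrank_span_eq_card hdli, Fintype.card_fin]
    have hmono := Submodule.finrank_mono hsub
    rw [hrk] at hmono
    exact le_trans hlos hmono
  · -- tail case
    have hKk' : K' < k := by
      have := j0.isLt
      omega
    have hs : tau N' (K' - 1) = 1 := hs1 hKk'
    have hp : N' + ((j0 : ℕ) - K') < n := by
      have := j0.isLt
      omega
    have hval : cmb θ N' K' lam ⟨N' + ((j0 : ℕ) - K'), hp⟩ = lam j0 * θ ^ (N' + ((j0 : ℕ) - K')) := by
      rw [cmb, Finset.sum_eq_single j0]
      · rw [gvec, if_neg hA, if_pos (by simp only [Fin.val_mk])]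
      · intro b _ hb
        rcases lt_or_gt_of_ne (fun h : (b : ℕ) = (j0 : ℕ) => hb (Fin.ext h)) with hlt | hgt
        · rw [hzero b hlt, zero_mul]
        · have hbK : ¬ ((b : ℕ) < K') := by omega
          have : gvec θ N' K' n k b ⟨N' + ((j0 : ℕ) - K'), hp⟩ = 0 := by
            rw [gvec, if_neg hbK, if_neg ?_]
            simp only [Fin.val_mk]
            omega
          rw [this, mul_zero]
      · intro h
        exact absurd (Finset.mem_univ _) h
    have hx : lam j0 * θ ^ (N' + ((j0 : ℕ) - K')) ≠ 0 :=
      mul_ne_zero hj0 (pow_ne_zero _ hθ0)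
    have hsub : span K {lam j0 * θ ^ (N' + ((j0 : ℕ) - K'))}
        ≤ span K (Set.range (cmb θ N' K' (n := n) lam)) := by
      rw [span_le]
      rintro x hx'
      rcases Set.mem_singleton_iff.mp hx' with rfl
      rw [← hval]
      exact subset_span (Set.mem_range_self _)
    have := Submodule.finrank_mono hsub
    rw [finrank_span_singleton hx] at this
    omega

end Weights

end RankSpectrumAux



open RankSpectrumAux in
/-- Theorem (construction, case n ≤ m): there exists an [n,k]_{q^m/q} code whose weight
spectrum is exactly {s, s+1, …, n}, where s = max{⌊n/2^(k−1)⌋, 1}. -/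
theorem exists_code_weightSpectrum_Icc_of_le (q m n k : ℕ) (hq : IsPrimePow q)
    (hk : 1 < k) (hkn : k < n) (hnm : n ≤ m)
    (K L : Type) [Field K] [Fintype K] [Field L] [Algebra K L]
    (hcard : Fintype.card K = q) (hdeg : Module.finrank K L = m) :
    ∃ C : Submodule L (Fin n → L), Module.finrank L C = k ∧
      weightSpectrum K C = Set.Icc (max (n / 2 ^ (k - 1)) 1) n ∧
      (weightSpectrum K C).ncard = n - max (n / 2 ^ (k - 1)) 1 + 1 := by
  classical
  have hm3 : 3 ≤ m := by omega
  haveI : FiniteDimensional K L := FiniteDimensional.of_finrank_pos (by omega)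
  haveI : Fintype L := Module.fintypeOfFintype (Module.finBasis K L)
  haveI : Finite L := Finite.of_fintype L
  obtain ⟨α, hα⟩ := Field.exists_primitive_element_of_finite_top K L
  have hint : IsIntegral K α := IsIntegral.of_finite K α
  let pb : PowerBasis K L := (IntermediateField.adjoin.powerBasis hint).map
    ((IntermediateField.equivOfEq hα).trans IntermediateField.topEquiv)
  have hdim : pb.dim = m := pb.finrank.symm.trans hdeg
  set θ : L := pb.gen with hθd
  have hθli : LinearIndependent K (fun i : Fin m => θ ^ (i : ℕ)) := by
    have h1 := pb.basis.linearIndependent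
    rw [pb.coe_basis] at h1
    have h2 := h1.comp (Fin.cast hdim.symm) (Fin.cast_injective _)
    have h3 : ((fun i : Fin pb.dim => pb.gen ^ (i : ℕ)) ∘ (Fin.cast hdim.symm))
        = fun i : Fin m => θ ^ (i : ℕ) := by
      funext i
      simp [Fin.coe_cast, hθd]
    rw [h3] at h2
    exact h2
  -- numeric setup
  set K' : ℕ := Nat.findGreatest (fun j => 2 ^ (j - 1) ≤ n - k + j) k with hK'd
  have hP1 : 2 ^ (1 - 1) ≤ n - k + 1 := by norm_num
  have hK1 : 1 ≤ K' := Nat.le_findGreatest (P := fun j => 2 ^ (j - 1) ≤ n - k + j) (by omega) hP1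
  have hKk : K' ≤ k := Nat.findGreatest_le k
  have hPK : 2 ^ (K' - 1) ≤ n - k + K' :=
    Nat.findGreatest_spec (P := fun j => 2 ^ (j - 1) ≤ n - k + j) (show 1 ≤ k by omega) hP1
  set N' : ℕ := n - (k - K') with hN'd
  have hNn : N' + (k - K') = n := by omega
  have hN2 : 2 ^ (K' - 1) ≤ N' := by omega
  have hN1 : 1 ≤ N' := le_trans Nat.one_le_two_pow hN2
  have hs1 : K' < k → tau N' (K' - 1) = 1 ∧ n / 2 ^ (k - 1) = 0 := by
    intro hlt
    have hnot : ¬ (2 ^ (K' + 1 - 1) ≤ n - k + (K' + 1)) :=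
      Nat.findGreatest_is_greatest (P := fun j => 2 ^ (j - 1) ≤ n - k + j)
        (n := k) (k := K' + 1) (by omega) (by omega)
    simp only [Nat.add_sub_cancel] at hnot
    have h1 : N' + 1 < 2 ^ K' := by omega
    have hp : (0 : ℕ) < 2 ^ (K' - 1) := Nat.pow_pos (by norm_num)
    have hK'e : 2 ^ K' = 2 * 2 ^ (K' - 1) := by
      conv_lhs => rw [show K' = (K' - 1) + 1 by omega]
      rw [pow_succ]
      ring
    have hge : 1 ≤ N' / 2 ^ (K' - 1) := (Nat.one_le_div_iff hp).mpr hN2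
    have hlt2 : N' / 2 ^ (K' - 1) < 2 := by
      rw [Nat.div_lt_iff_lt_mul hp]
      omega
    have h2 : N' / 2 ^ (K' - 1) = 1 := by omega
    have hpa := pow_add_le K' ((k - 1) - K')
    have hsum : K' + ((k - 1) - K') = k - 1 := by omega
    rw [hsum] at hpa
    have h3 : n < 2 ^ (k - 1) := by omega
    have h4 : n / 2 ^ (k - 1) = 0 := Nat.div_eq_of_lt h3
    constructor
    · rw [tau, h2]
      omega
    · exact h4

  have hs1' : K' < k → tau N' (K' - 1) = 1 := fun h => (hs1 h).1
  have hs_eq : max (n / 2 ^ (k - 1)) 1 = tau N' (K' - 1) := by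
    by_cases hke : K' = k
    · have hN'n : N' = n := by omega
      rw [tau, hN'n, hke]
    · obtain ⟨ha, hb⟩ := hs1 (by omega)
      rw [ha, hb]
      omega
  have hspos : 1 ≤ max (n / 2 ^ (k - 1)) 1 := le_max_right _ _
  have hsn : max (n / 2 ^ (k - 1)) 1 ≤ n := by
    have : n / 2 ^ (k - 1) ≤ n := Nat.div_le_self _ _
    omega
  -- the code
  set g : Fin k → Fin n → L := gvec θ N' K' n k with hgd
  set C : Submodule L (Fin n → L) := Submodule.span L (Set.range g) with hCd
  have hcomb : ∀ lam : Fin k → L, (∑ j, lam j • g j) = cmb θ N' K' lam := fun lam =>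
    cmb_eq_sum_smul θ N' K' lam
  have hmemC : ∀ lam : Fin k → L, cmb θ N' K' lam ∈ C := by
    intro lam
    rw [hCd]
    exact (mem_span_range_iff_exists_fun L).mpr ⟨lam, hcomb lam⟩
  have hzero_of : ∀ c : Fin n → L, c = 0 →
      Module.finrank K (Submodule.span K (Set.range c)) = 0 := by
    rintro c rfl
    have hb : Submodule.span K (Set.range (0 : Fin n → L)) = ⊥ := by
      rw [Submodule.span_eq_bot]
      rintro x ⟨i, rfl⟩
      rfl
    rw [hb, finrank_bot]
  -- linear independence of the generators over L
  have hgli : LinearIndependent L g := by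
    rw [Fintype.linearIndependent_iff]
    intro lam hsum j
    by_contra hne
    have hlam : lam ≠ 0 := fun h => hne (by rw [h]; rfl)
    have hlb := key_lb hθli hnm hkn hK1 hKk hNn hN2 hs1' lam hlam
    have h0 : cmb θ N' K' lam = (0 : Fin n → L) := by rw [← hcomb]; exact hsum
    rw [h0, hzero_of _ rfl] at hlb
    have := tau_pos N' (K' - 1)
    omega
  have hdimC : Module.finrank L C = k := by
    rw [hCd, finrank_span_eq_card hgli, Fintype.card_fin]
  -- the spectrum
  have hspec : weightSpectrum K C = Set.Icc (max (n / 2 ^ (k - 1)) 1) n := by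
    ext t
    simp only [weightSpectrum, Set.mem_setOf_eq, Set.mem_Icc]
    constructor
    · rintro ⟨c, hcC, hc0, rfl⟩
      rw [hCd] at hcC
      obtain ⟨lam, hlam⟩ := (mem_span_range_iff_exists_fun L).mp hcC
      have hlam0 : lam ≠ 0 := by
        rintro rfl
        apply hc0
        rw [← hlam]
        simp
      have hc : c = cmb θ N' K' lam := by rw [← hlam, hcomb]
      constructor
      · rw [hs_eq]
        have hlb := key_lb hθli hnm hkn hK1 hKk hNn hN2 hs1' lam hlam0
        rw [← hc] at hlb
        exact hlb
      · have h1 := finrank_range_le_card (R := K) c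
        rw [Set.finrank] at h1
        rw [rankWeight]
        simpa using h1
    · rintro ⟨hts, htn⟩
      have ht1 : 1 ≤ t := le_trans hspos hts
      rw [hs_eq] at hts
      by_cases htN : t ≤ N'
      · -- active coverage
        have hex : ∃ j, tau N' j ≤ t := ⟨K' - 1, hts⟩
        have hjle : tau N' (Nat.find hex) ≤ t := Nat.find_spec hex
        have hjK : Nat.find hex ≤ K' - 1 := Nat.find_min' hex hts
        set j := Nat.find hex with hjd
        by_cases heq : tau N' j = t
        · -- pure generator
          have hjlt : j < k := by omega
          have hjK' : ((⟨j, hjlt⟩ : Fin k) : ℕ) < K' := by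
            simp only [Fin.val_mk]
            omega
          have hw := weight_pure hθli hnm hkn hK1 hKk hNn hN2 ⟨j, hjlt⟩ hjK'
          simp only [Fin.val_mk] at hw
          refine ⟨g ⟨j, hjlt⟩, Submodule.subset_span (Set.mem_range_self _), ?_, ?_⟩
          · intro h0
            rw [hgd] at h0
            rw [h0, hzero_of _ rfl] at hw
            have := tau_pos N' j
            omega
          · show Module.finrank K (Submodule.span K (Set.range (g ⟨j, hjlt⟩))) = t
            rw [hgd]
            exact hw.trans heq
        · -- twisted codeword
          have hj1 : 1 ≤ j := by
            by_contra h
            have hj0 : j = 0 := by omega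
            rw [hj0, tau_zero hN1] at hjle heq
            omega
          have hT : ¬ tau N' (j - 1) ≤ t := Nat.find_min hex (by omega)
          have hD := tau_le_two_succ N' (j - 1)
          rw [show j - 1 + 1 = j by omega] at hD
          have hT2 : 2 ≤ tau N' (j - 1) := by omega
          obtain ⟨lam, hw⟩ := weight_w hθli hnm hkn hK1 hKk hNn hN2 j (tau N' (j - 1) - t)
            hj1 (by omega) (by omega) (by omega) (by omega) hT2
          have hwt : tau N' (j - 1) - (tau N' (j - 1) - t) = t := by omega
          rw [hwt] at hw
          refine ⟨cmb θ N' K' lam, hmemC lam, ?_, ?_⟩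
          · intro h0
            rw [h0, hzero_of _ rfl] at hw
            omega
          · exact hw
      · -- tail coverage
        obtain ⟨lam, hw⟩ := weight_tail hθli hnm hkn hK1 hKk hNn hN2 (t - N')
          (by omega) (by omega)
        have hwt : N' + (t - N') = t := by omega
        rw [hwt] at hw
        refine ⟨cmb θ N' K' lam, hmemC lam, ?_, ?_⟩
        · intro h0
          rw [h0, hzero_of _ rfl] at hw
          omega
        · exact hw
  refine ⟨C, hdimC, hspec, ?_⟩
  rw [hspec, ← Finset.coe_Icc, Set.ncard_coe_finset, Nat.card_Icc]
  omega
end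

section
/- Let q be a prime power and let k, n, m be integers with 1 < k < n ≤ m. Set s = max{⌊n/2^{k−1}⌋, 1}. Then every [n,k]_{q^m/q} rank-metric code C satisfies |WS(C)| ≤ n − s + 1, i.e., C has at most n − s + 1 distinct nonzero rank weights. -/
namespace WSAux

open Module Submodule LinearMap Finset

variable {K L : Type} [Field K] [Field L] [Algebra K L] {n : ℕ}

/-- For `c ∈ L^n`, the `K`-linear map `K^n → L`, `x ↦ ∑ j, x j • c j`, bundled `L`-linearly
in `c`. -/
noncomputable def Psi : (Fin n → L) →ₗ[L] ((Fin n → K) →ₗ[K] L) where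
  toFun c := Fintype.linearCombination K c
  map_add' a b := by
    ext x
    simp [Fintype.linearCombination_apply, Finset.sum_add_distrib, smul_add]
  map_smul' a c := by
    ext x
    simp [Fintype.linearCombination_apply, Finset.smul_sum, smul_comm]

/-- Relative rank weight of `c` with respect to a subspace `Λ ≤ K^n`. -/
noncomputable def wrel (Λ : Submodule K (Fin n → K)) (c : Fin n → L) : ℕ :=
  Module.finrank K (Λ.map (Psi (K := K) c))

/-- The subcode of vectors annihilated (as linear functionals on `K^n`) on all of `Λ`. -/
def bigZ (Λ : Submodule K (Fin n → K)) : Submodule L (Fin n → L) where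
  carrier := {c | ∀ x ∈ Λ, Psi (K := K) c x = 0}
  zero_mem' := by
    intro x hx
    rw [map_zero]
    rfl
  add_mem' := by
    intro a b ha hb x hx
    rw [map_add, LinearMap.add_apply, ha x hx, hb x hx, add_zero]
  smul_mem' := by
    intro a c hc x hx
    rw [map_smul, LinearMap.smul_apply, hc x hx, smul_zero]

lemma mem_bigZ {Λ : Submodule K (Fin n → K)} {c : Fin n → L} :
    c ∈ bigZ (L := L) Λ ↔ ∀ x ∈ Λ, Psi (K := K) c x = 0 := Iff.rfl

lemma bigZ_mono {Λ' Λ : Submodule K (Fin n → K)} (h : Λ' ≤ Λ) :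
    bigZ (L := L) Λ ≤ bigZ (L := L) Λ' :=
  fun _c hc x hx => hc x (h hx)

set_option synthInstance.maxHeartbeats 1000000 in
/-- Rank–nullity for the restriction of a linear map to a submodule. -/
lemma finrank_map_add_finrank_inf_ker [FiniteDimensional K L]
    (Λ : Submodule K (Fin n → K)) (f : (Fin n → K) →ₗ[K] L) :
    finrank K (Λ.map f) + finrank K ↥(Λ ⊓ ker f) = finrank K Λ := by
  have h := LinearMap.finrank_range_add_finrank_ker (f.domRestrict Λ)
  rw [LinearMap.range_domRestrict, LinearMap.ker_domRestrict] at h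
  have e : (ker f).comap Λ.subtype = (Λ ⊓ ker f).comap Λ.subtype := by
    rw [Submodule.comap_inf, Submodule.comap_subtype_self, top_inf_eq]
  rw [e] at h
  have e2 : finrank K ↥(Submodule.comap Λ.subtype (Λ ⊓ ker f)) = finrank K ↥(Λ ⊓ ker f) :=
    (Submodule.comapSubtypeEquivOfLe (inf_le_left (a := Λ) (b := ker f))).finrank_eq
  rw [e2] at h
  exact h

lemma wrel_mono [FiniteDimensional K L] {Λ' Λ : Submodule K (Fin n → K)} (h : Λ' ≤ Λ)
    (c : Fin n → L) : wrel Λ' c ≤ wrel Λ c :=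
  Submodule.finrank_mono (Submodule.map_mono h)

/-- The main recursive construction: a chain of subspaces of `K^n` whose level minima give
an interval cover of the relative weight spectrum. -/
lemma rec_lemma [FiniteDimensional K L] (C : Submodule L (Fin n → L)) :
    ∀ (t : ℕ) (Λ : Submodule K (Fin n → K)),
      finrank L C ≤ finrank L ↥(C ⊓ bigZ (L := L) Λ) + t →
      ∃ (T : ℕ) (d : ℕ → ℕ), T ≤ t ∧ (∀ j < T, 1 ≤ d j) ∧
        (∑ j ∈ Finset.range T, d j) ≤ finrank K Λ ∧
        ∀ c ∈ C, c ∉ bigZ (L := L) Λ →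
          ∃ j < T, (∀ i ≤ j, d i ≤ wrel Λ c) ∧ wrel Λ c ≤ ∑ i ∈ Finset.range (j + 1), d i := by
  intro t
  induction t with
  | zero =>
    intro Λ h
    have heq : C ⊓ bigZ (L := L) Λ = C :=
      Submodule.eq_of_le_of_finrank_le inf_le_left (by omega)
    refine ⟨0, fun _ => 1, le_refl _, by omega, by simp, ?_⟩
    intro c hc hcz
    rw [← heq] at hc
    exact absurd hc.2 hcz
  | succ t ih =>
    intro Λ h
    by_cases hall : ∀ c ∈ C, c ∈ bigZ (L := L) Λ
    · refine ⟨0, fun _ => 1, by omega, by omega, by simp, ?_⟩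
      intro c hc hcz
      exact absurd (hall c hc) hcz
    · push_neg at hall
      obtain ⟨cex, hcexC, hcexZ⟩ := hall
      have hSSne : {v : ℕ | ∃ c, c ∈ C ∧ c ∉ bigZ (L := L) Λ ∧ wrel Λ c = v}.Nonempty :=
        ⟨wrel Λ cex, cex, hcexC, hcexZ, rfl⟩
      obtain ⟨c₀, hc₀C, hc₀Z, hc₀w⟩ := Nat.sInf_mem hSSne
      have hmin : ∀ c ∈ C, c ∉ bigZ (L := L) Λ → wrel Λ c₀ ≤ wrel Λ c := fun c hc hz => by
        rw [hc₀w]; exact Nat.sInf_le ⟨c, hc, hz, rfl⟩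
      have hd₀pos : 1 ≤ wrel Λ c₀ := by
        rcases Nat.eq_zero_or_pos (wrel Λ c₀) with h0 | h1
        · exfalso
          apply hc₀Z
          intro x hx
          have hmapbot : Λ.map (Psi (K := K) c₀) = ⊥ :=
            Submodule.finrank_eq_zero.mp h0
          have : Psi (K := K) c₀ x ∈ Λ.map (Psi (K := K) c₀) :=
            Submodule.mem_map_of_mem hx
          rw [hmapbot] at this
          exact this
        · exact h1
      set Λ' : Submodule K (Fin n → K) := Λ ⊓ ker (Psi (K := K) c₀) with hΛ'
      have hΛ'le : Λ' ≤ Λ := inf_le_left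
      have hrn : wrel Λ c₀ + finrank K ↥Λ' = finrank K ↥Λ :=
        finrank_map_add_finrank_inf_ker (L := L) Λ (Psi (K := K) c₀)
      have hc₀Z' : c₀ ∈ bigZ (L := L) Λ' := by
        intro x hx
        exact hx.2
      have hlt : C ⊓ bigZ (L := L) Λ < C ⊓ bigZ (L := L) Λ' := by
        refine lt_of_le_of_ne (inf_le_inf_left _ (bigZ_mono hΛ'le)) ?_
        intro heq
        have : c₀ ∈ C ⊓ bigZ (L := L) Λ := heq ▸ (Submodule.mem_inf.mpr ⟨hc₀C, hc₀Z'⟩)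
        exact hc₀Z this.2
      have hfuel : finrank L C ≤ finrank L ↥(C ⊓ bigZ (L := L) Λ') + t := by
        have := Submodule.finrank_lt_finrank_of_lt hlt
        omega
      obtain ⟨T', d', hT', hd'pos, hd'sum, hcov'⟩ := ih Λ' hfuel
      have hsum_succ : ∀ N : ℕ, (∑ i ∈ Finset.range (N + 1),
          (if i = 0 then wrel Λ c₀ else d' (i - 1))) =
          (∑ i ∈ Finset.range N, d' i) + wrel Λ c₀ := by
        intro N
        rw [Finset.sum_range_succ']
        simp
      refine ⟨T' + 1, fun j => if j = 0 then wrel Λ c₀ else d' (j - 1), by omega, ?_, ?_, ?_⟩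
      · intro j hj
        by_cases hj0 : j = 0
        · simp only [hj0, if_pos rfl]
          exact hd₀pos
        · simp only [hj0, if_false]
          exact hd'pos (j - 1) (by omega)
      · rw [hsum_succ T']
        omega
      · intro c hcC hcZ
        have hwc : wrel Λ c + finrank K ↥(Λ ⊓ ker (Psi (K := K) c)) = finrank K ↥Λ :=
          finrank_map_add_finrank_inf_ker (L := L) Λ (Psi (K := K) c)
        by_cases hcZ' : c ∈ bigZ (L := L) Λ'
        · refine ⟨0, by omega, ?_, ?_⟩
          · intro i hi
            have hi0 : i = 0 := by omega
            simp only [hi0, if_pos rfl]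
            exact hmin c hcC hcZ
          · have hker : Λ' ≤ Λ ⊓ ker (Psi (K := K) c) := by
              refine le_inf hΛ'le ?_
              intro x hx
              exact LinearMap.mem_ker.mpr (hcZ' x hx)
            have hmono := Submodule.finrank_mono hker
            rw [hsum_succ 0]
            simp only [Finset.range_zero, Finset.sum_empty, zero_add]
            omega
        · obtain ⟨j', hj', hlow', hup'⟩ := hcov' c hcC hcZ'
          refine ⟨j' + 1, by omega, ?_, ?_⟩
          · intro i hi
            by_cases hi0 : i = 0
            · simp only [hi0, if_pos rfl]
              exact hmin c hcC hcZ
            · simp only [hi0, if_false]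
              have h1 : d' (i - 1) ≤ wrel Λ' c := hlow' (i - 1) (by omega)
              have h2 : wrel Λ' c ≤ wrel Λ c := wrel_mono hΛ'le c
              exact le_trans h1 h2
          · have hstep : wrel Λ c ≤ wrel Λ' c + wrel Λ c₀ := by
              have hwc' : wrel Λ' c + finrank K ↥(Λ' ⊓ ker (Psi (K := K) c)) =
                  finrank K ↥Λ' :=
                finrank_map_add_finrank_inf_ker (L := L) Λ' (Psi (K := K) c)
              have hmono : finrank K ↥(Λ' ⊓ ker (Psi (K := K) c)) ≤
                  finrank K ↥(Λ ⊓ ker (Psi (K := K) c)) :=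
                Submodule.finrank_mono (inf_le_inf_right _ hΛ'le)
              omega
            rw [hsum_succ (j' + 1)]
            have := hup'
            omega

/-- Partial sums of the level minima. -/
def DD (d : ℕ → ℕ) (j : ℕ) : ℕ := ∑ i ∈ Finset.range (j + 1), d i

/-- Running maxima of the level minima. -/
def MM (d : ℕ → ℕ) (j : ℕ) : ℕ := (Finset.range (j + 1)).sup d

/-- The interval cover. -/
def AA (T : ℕ) (d : ℕ → ℕ) : Finset ℕ :=
  (Finset.range T).biUnion (fun j => Finset.Icc (MM d j) (DD d j))

lemma num_lemma : ∀ (T : ℕ) (d : ℕ → ℕ), (∀ j < T + 1, 1 ≤ d j) →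
    ∃ G : ℕ, (AA (T + 1) d).card + G ≤ DD d T ∧ DD d T + 1 ≤ 2 ^ T * (G + 2) := by
  intro T
  induction T with
  | zero =>
    intro d hpos
    have h0 : 1 ≤ d 0 := hpos 0 (by omega)
    refine ⟨d 0 - 1, ?_, ?_⟩
    · have hA : AA 1 d = Finset.Icc (MM d 0) (DD d 0) := by
        simp [AA, Finset.range_one]
      have hM : MM d 0 = d 0 := by simp [MM, Finset.range_one]
      have hD : DD d 0 = d 0 := by simp [DD, Finset.range_one]
      rw [hA, hM, hD, Nat.card_Icc]
      omega
    · have hD : DD d 0 = d 0 := by simp [DD, Finset.range_one]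
      rw [hD]
      simp
      omega
  | succ T ih =>
    intro d hpos
    obtain ⟨G, h1, h2⟩ := ih d (fun j hj => hpos j (by omega))
    have hAsplit : AA (T + 1 + 1) d =
        Finset.Icc (MM d (T + 1)) (DD d (T + 1)) ∪ AA (T + 1) d := by
      rw [AA, Finset.range_add_one, Finset.biUnion_insert]
      rfl
    have hMmono : MM d T ≤ MM d (T + 1) :=
      Finset.sup_mono (Finset.range_subset_range.mpr (by omega))
    have hdM : d (T + 1) ≤ MM d (T + 1) :=
      Finset.le_sup (Finset.self_mem_range_succ (T + 1))
    have hDD : DD d (T + 1) = DD d T + d (T + 1) := Finset.sum_range_succ d (T + 1)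
    -- new elements lie in a top interval
    have hsub : Finset.Icc (MM d (T + 1)) (DD d (T + 1)) \ AA (T + 1) d ⊆
        Finset.Icc (max (MM d (T + 1)) (DD d T + 1)) (DD d (T + 1)) := by
      intro x hx
      rw [Finset.mem_sdiff] at hx
      obtain ⟨hxI, hxA⟩ := hx
      rw [Finset.mem_Icc] at hxI
      rw [Finset.mem_Icc]
      refine ⟨max_le hxI.1 ?_, hxI.2⟩
      by_contra hcon
      push_neg at hcon
      apply hxA
      rw [AA, Finset.mem_biUnion]
      exact ⟨T, Finset.self_mem_range_succ T,
        Finset.mem_Icc.mpr ⟨le_trans hMmono hxI.1, by omega⟩⟩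
    have hcardnew : (Finset.Icc (MM d (T + 1)) (DD d (T + 1)) \ AA (T + 1) d).card ≤
        DD d (T + 1) + 1 - max (MM d (T + 1)) (DD d T + 1) := by
      calc (Finset.Icc (MM d (T + 1)) (DD d (T + 1)) \ AA (T + 1) d).card
          ≤ (Finset.Icc (max (MM d (T + 1)) (DD d T + 1)) (DD d (T + 1))).card :=
            Finset.card_le_card hsub
        _ = DD d (T + 1) + 1 - max (MM d (T + 1)) (DD d T + 1) := Nat.card_Icc _ _
    have hcardA : (AA (T + 1 + 1) d).card ≤
        (AA (T + 1) d).card + (DD d (T + 1) + 1 - max (MM d (T + 1)) (DD d T + 1)) := by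
      rw [hAsplit]
      calc (Finset.Icc (MM d (T + 1)) (DD d (T + 1)) ∪ AA (T + 1) d).card
          = (AA (T + 1) d ∪ Finset.Icc (MM d (T + 1)) (DD d (T + 1))).card := by
            rw [Finset.union_comm]
        _ = (AA (T + 1) d ∪
            (Finset.Icc (MM d (T + 1)) (DD d (T + 1)) \ AA (T + 1) d)).card := by
            rw [Finset.union_sdiff_self_eq_union]
        _ ≤ (AA (T + 1) d).card +
            (Finset.Icc (MM d (T + 1)) (DD d (T + 1)) \ AA (T + 1) d).card :=
            Finset.card_union_le _ _
        _ ≤ _ := by omega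
    have hMD : MM d (T + 1) ≤ DD d (T + 1) :=
      Finset.sup_le (fun i hi => Finset.single_le_sum (fun _ _ => Nat.zero_le _) hi)
    set g : ℕ := MM d (T + 1) - (DD d T + 1) with hg
    refine ⟨G + g, ?_, ?_⟩
    · rcases le_total (MM d (T + 1)) (DD d T + 1) with hc | hc
      · rw [max_eq_right hc] at hcardA
        omega
      · rw [max_eq_left hc] at hcardA
        omega
    · have hd' : d (T + 1) ≤ DD d T + 1 + g := by omega
      have hX : 2 ^ (T + 1) * ((G + g) + 2) = 2 * (2 ^ T * (G + 2)) + 2 ^ (T + 1) * g := by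
        rw [pow_succ]
        ring
      have hgg : g ≤ 2 ^ (T + 1) * g := Nat.le_mul_of_pos_left g (Nat.pow_pos (by omega))
      omega

end WSAux

open WSAux Module Submodule LinearMap Finset in
/-- Theorem (upper bound, case n ≤ m): every [n,k]_{q^m/q} code has at most n − s + 1
distinct nonzero rank weights, where s = max{⌊n/2^{k−1}⌋, 1}. -/
theorem weightSpectrum_ncard_le_of_le (q m n k : ℕ) (hq : IsPrimePow q)
    (hk : 1 < k) (hkn : k < n) (hnm : n ≤ m)
    (K L : Type) [Field K] [Fintype K] [Field L] [Algebra K L]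
    (hcard : Fintype.card K = q) (hdeg : Module.finrank K L = m)
    (C : Submodule L (Fin n → L)) (hdim : Module.finrank L C = k) :
    (weightSpectrum K C).ncard ≤ n - max (n / 2 ^ (k - 1)) 1 + 1 := by
  haveI : FiniteDimensional K L := FiniteDimensional.of_finrank_pos (by rw [hdeg]; omega)
  -- basic facts
  have hn1 : 1 ≤ n := by omega
  have hdivle : n / 2 ^ (k - 1) ≤ n := Nat.div_le_self _ _
  -- nonzero vectors are not in `bigZ ⊤`
  have hnotZ : ∀ c : Fin n → L, c ≠ 0 → c ∉ bigZ (K := K) (⊤ : Submodule K (Fin n → K)) := by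
    intro c hc hmem
    obtain ⟨j, hj⟩ := Function.ne_iff.mp hc
    apply hj
    have := hmem (Pi.single j 1) (Submodule.mem_top)
    rw [show Psi (K := K) c (Pi.single j 1) = (1 : K) • c j from
      Fintype.linearCombination_apply_single ..] at this
    simpa using this
  -- rank weight is the relative weight with respect to ⊤
  have hwrel_top : ∀ c : Fin n → L, rankWeight K c = wrel (⊤ : Submodule K (Fin n → K)) c := by
    intro c
    unfold rankWeight wrel
    rw [Submodule.map_top]
    rw [show LinearMap.range (Psi (K := K) c) = Submodule.span K (Set.range c) from
      Fintype.range_linearCombination ..]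
  -- apply the recursive lemma at the top level
  obtain ⟨T, d, hT, hdpos, hsum, hcov⟩ :=
    rec_lemma (K := K) C k (⊤ : Submodule K (Fin n → K)) (by rw [hdim]; exact Nat.le_add_left _ _)
  have hsumn : (∑ j ∈ Finset.range T, d j) ≤ n := by
    have : finrank K (⊤ : Submodule K (Fin n → K)) = n := by
      rw [finrank_top, Module.finrank_pi, Fintype.card_fin]
    omega
  rcases Nat.eq_zero_or_pos T with hT0 | hTpos
  · -- empty spectrum
    have hempty : weightSpectrum K C = ∅ := by
      ext w
      simp only [weightSpectrum, Set.mem_setOf_eq, Set.mem_empty_iff_false, iff_false]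
      rintro ⟨c, hcC, hc0, hw⟩
      obtain ⟨j, hj, _⟩ := hcov c hcC (hnotZ c hc0)
      omega
    rw [hempty, Set.ncard_empty]
    omega
  · obtain ⟨T', rfl⟩ : ∃ T', T = T' + 1 := ⟨T - 1, by omega⟩
    -- the spectrum is contained in the interval cover
    have hWS : weightSpectrum K C ⊆ ↑(AA (T' + 1) d) := by
      rintro w ⟨c, hcC, hc0, hw⟩
      obtain ⟨j, hj, hlow, hup⟩ := hcov c hcC (hnotZ c hc0)
      refine Finset.mem_coe.mpr ?_
      rw [AA, Finset.mem_biUnion]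
      refine ⟨j, Finset.mem_range.mpr hj, Finset.mem_Icc.mpr ⟨?_, ?_⟩⟩
      · apply Finset.sup_le
        intro i hi
        rw [← hw, hwrel_top]
        exact hlow i (by simpa [Nat.lt_succ_iff] using hi)
      · rw [← hw, hwrel_top]
        exact hup
    have hcard : (weightSpectrum K C).ncard ≤ (AA (T' + 1) d).card := by
      have := Set.ncard_le_ncard hWS (AA (T' + 1) d).finite_toSet
      rwa [Set.ncard_coe_finset] at this
    obtain ⟨G, h1, h2⟩ := num_lemma T' d (fun j hj => hdpos j (by omega))
    have hDn : DD d T' ≤ n := hsumn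
    have hTk : 2 ^ T' ≤ 2 ^ (k - 1) := Nat.pow_le_pow_right (by omega) (by omega)
    have h2' : DD d T' + 1 ≤ 2 ^ (k - 1) * (G + 2) :=
      le_trans h2 (Nat.mul_le_mul_right _ hTk)
    rcases le_or_gt (max (n / 2 ^ (k - 1)) 1) (G + 1) with hcase | hcase
    · omega
    · -- G + 2 ≤ s, so s = n / 2^(k-1) ≥ 2
      set a : ℕ := n / 2 ^ (k - 1) with ha
      have hGa : G + 2 ≤ a := by omega
      set x : ℕ := a - (G + 2) with hx
      have hax : a = G + 2 + x := by omega
      have hsplit : 2 ^ (k - 1) * a = 2 ^ (k - 1) * (G + 2) + 2 ^ (k - 1) * x := by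
        rw [hax, Nat.mul_add]
      have hxle : x ≤ 2 ^ (k - 1) * x :=
        Nat.le_mul_of_pos_left x (Nat.pow_pos (by omega))
      have hPa : a * 2 ^ (k - 1) ≤ n := Nat.div_mul_le_self n _
      have hPa' : 2 ^ (k - 1) * a ≤ n := by rwa [Nat.mul_comm] at hPa
      omega
end

section
/- Let k ≥ 1 and n be integers with n ≥ 2^k, and set s = ⌊n/2^{k−1}⌋ (so s > 1). Let S be a subset of {1, 2, …, n} with |S| ≥ n − s + 2. Then there exist k+1 elements s_0, s_1, …, s_k ∈ S such that s_j > s_0 + s_1 + ⋯ + s_{j−1} for every j with 1 ≤ j ≤ k. -/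
/-- Combinatorial lemma (case n ≤ m): if n ≥ 2^k, s = ⌊n/2^{k−1}⌋, and S ⊆ {1,…,n} has at
least n − s + 2 elements, then S contains k+1 elements s_0,…,s_k with each s_j greater than
the sum of the preceding ones. -/
theorem exists_superincreasing_of_large_subset (k n s : ℕ) (hk : 1 ≤ k) (hn : 2 ^ k ≤ n)
    (hs : s = n / 2 ^ (k - 1))
    (S : Finset ℕ) (hS : S ⊆ Finset.Icc 1 n) (hcard : n - s + 2 ≤ S.card) :
    ∃ e : ℕ → ℕ, (∀ i ≤ k, e i ∈ S) ∧
      ∀ j, 1 ≤ j → j ≤ k → (∑ i ∈ Finset.range j, e i) < e j := by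
  classical
  set T : Finset ℕ := (Finset.Icc 1 n) \ S with hT
  set M := T.card with hM
  have hsle : s ≤ n := hs ▸ Nat.div_le_self _ _
  have hSn : S.card ≤ n := by
    have := Finset.card_le_card hS
    simpa using this
  have hMn : M = n - S.card := by
    rw [hM, hT, Finset.card_sdiff_of_subset hS, Nat.card_Icc]; omega
  have h2s : 2 ≤ s := by
    rw [hs, Nat.le_div_iff_mul_le (by positivity)]
    have h : 2 * 2 ^ (k - 1) = 2 ^ k := by
      rw [← pow_succ']
      congr 1
      omega
    omega
  have hM2s : M + 2 ≤ s := by omega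
  have hpow : 2 ^ (k - 1) * s ≤ n := by
    rw [hs, mul_comm]
    exact Nat.div_mul_le_self n _
  -- key bound: for j < k, 2^j * (M+2) ≤ n
  have hkey : ∀ j, j < k → 2 ^ j * (M + 2) ≤ n := by
    intro j hj
    calc 2 ^ j * (M + 2) ≤ 2 ^ (k - 1) * s :=
          Nat.mul_le_mul (Nat.pow_le_pow_right (by norm_num) (by omega)) hM2s
      _ ≤ n := hpow
  have main : ∀ j, j ≤ k → ∃ e : ℕ → ℕ, (∀ i ≤ j, e i ∈ S) ∧
      (∀ i, 1 ≤ i → i ≤ j → (∑ x ∈ Finset.range i, e x) < e i) ∧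
      (∑ x ∈ Finset.range (j + 1), e x) + M + 1 ≤
        2 ^ j * (M + 2) +
          (T.filter (fun x => x ≤ ∑ x ∈ Finset.range (j + 1), e x)).card := by
    intro j hj
    induction j with
    | zero =>
      have hSne : S.Nonempty := Finset.card_pos.mp (by omega)
      set e0 := S.min' hSne with he0
      have he0S : e0 ∈ S := S.min'_mem hSne
      have he0n : e0 ≤ n := (Finset.mem_Icc.mp (hS he0S)).2
      have he0pos : 1 ≤ e0 := (Finset.mem_Icc.mp (hS he0S)).1
      refine ⟨fun _ => e0, fun i _ => he0S, by omega, ?_⟩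
      have hsub : Finset.Ico 1 e0 ⊆ T.filter (fun x => x ≤ e0) := by
        intro x hx
        rw [Finset.mem_Ico] at hx
        rw [Finset.mem_filter, hT, Finset.mem_sdiff, Finset.mem_Icc]
        refine ⟨⟨⟨hx.1, by omega⟩, fun hxS => ?_⟩, by omega⟩
        exact absurd (S.min'_le x hxS) (by omega)
      have hcard' := Finset.card_le_card hsub
      rw [Nat.card_Ico] at hcard'
      simp only [zero_add, Finset.sum_range_one, pow_zero, one_mul]
      omega
    | succ j ih =>
      obtain ⟨e, hmem, hsup, hinv⟩ := ih (by omega)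
      set σ := ∑ x ∈ Finset.range (j + 1), e x with hσ
      set u := (T.filter (fun x => x ≤ σ)).card with hu
      have huM : u ≤ M := Finset.card_filter_le _ _
      have hPn : 2 ^ j * (M + 2) ≤ n := hkey j (by omega)
      have hσn : σ + 1 ≤ n := by omega
      -- nonemptiness of elements of S above σ
      have huv : u + (T.filter (fun x => σ < x)).card = M := by
        have h := Finset.card_filter_add_card_filter_not
          (s := T) (p := fun x => x ≤ σ)
        simp only [not_le] at h
        exact h
      have hne : (S.filter (fun x => σ < x)).Nonempty := by
        rw [Finset.filter_nonempty_iff]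
        by_contra hcon
        push_neg at hcon
        have hsub2 : Finset.Icc (σ + 1) n ⊆ T.filter (fun x => σ < x) := by
          intro x hx
          rw [Finset.mem_Icc] at hx
          rw [Finset.mem_filter, hT, Finset.mem_sdiff, Finset.mem_Icc]
          exact ⟨⟨⟨by omega, hx.2⟩, fun hxS => absurd (hcon x hxS) (by omega)⟩, by omega⟩
        have hc2 := Finset.card_le_card hsub2
        rw [Nat.card_Icc] at hc2
        omega
      set e' := (S.filter (fun x => σ < x)).min' hne with he'
      have he'mem := (S.filter (fun x => σ < x)).min'_mem hne
      rw [Finset.mem_filter] at he'mem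
      have he'S : e' ∈ S := he'mem.1
      have he'σ : σ < e' := he'mem.2
      have he'n : e' ≤ n := (Finset.mem_Icc.mp (hS he'S)).2
      set newe : ℕ → ℕ := fun i => if i = j + 1 then e' else e i with hnewe
      have hsum : ∀ i, i ≤ j + 1 → ∑ x ∈ Finset.range i, newe x
          = ∑ x ∈ Finset.range i, e x := by
        intro i hi
        refine Finset.sum_congr rfl (fun x hx => ?_)
        rw [Finset.mem_range] at hx
        simp only [hnewe]
        rw [if_neg (by omega)]
      have hsum2 : ∑ x ∈ Finset.range (j + 2), newe x = σ + e' := by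
        rw [Finset.sum_range_succ, hsum (j + 1) le_rfl]
        simp [hnewe, hσ]
      -- card counting for new missing elements
      have hIoo : (T.filter (fun x => x ≤ σ)) ∪ Finset.Ioo σ e'
          ⊆ T.filter (fun x => x ≤ σ + e') := by
        intro x hx
        rw [Finset.mem_union] at hx
        rcases hx with hx | hx
        · rw [Finset.mem_filter] at hx ⊢
          exact ⟨hx.1, by omega⟩
        · rw [Finset.mem_Ioo] at hx
          rw [Finset.mem_filter, hT, Finset.mem_sdiff, Finset.mem_Icc]
          refine ⟨⟨⟨by omega, by omega⟩, fun hxS => ?_⟩, by omega⟩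
          have : e' ≤ x := (S.filter (fun x => σ < x)).min'_le x
            (Finset.mem_filter.mpr ⟨hxS, hx.1⟩)
          omega
      have hdisj : Disjoint (T.filter (fun x => x ≤ σ)) (Finset.Ioo σ e') := by
        rw [Finset.disjoint_left]
        intro x hx1 hx2
        rw [Finset.mem_filter] at hx1
        rw [Finset.mem_Ioo] at hx2
        omega
      have hcardu := Finset.card_le_card hIoo
      rw [Finset.card_union_of_disjoint hdisj, Nat.card_Ioo] at hcardu
      refine ⟨newe, ?_, ?_, ?_⟩
      · intro i hi
        simp only [hnewe]
        by_cases h : i = j + 1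
        · rw [if_pos h]; exact he'S
        · rw [if_neg h]; exact hmem i (by omega)
      · intro i hi1 hi2
        rw [hsum i hi2]
        by_cases h : i = j + 1
        · subst h
          simpa [hnewe] using he'σ
        · have : newe i = e i := by simp only [hnewe]; rw [if_neg h]
          rw [this]
          exact hsup i hi1 (by omega)
      · rw [hsum2]
        have h2P : 2 ^ (j + 1) * (M + 2) = 2 * (2 ^ j * (M + 2)) := by
          rw [pow_succ]; ring
        omega
  obtain ⟨e, hmem, hsup, _⟩ := main k le_rfl
  exact ⟨e, hmem, hsup⟩
end

section
/- Let q be a prime power and let k, n, m be integers with 1 < k < n ≤ m. Then there exists a full weight spectrum (FWS) [n,k]_{q^m/q} rank-metric code, i.e., an [n,k]_{q^m/q} code C with WS(C) = {1, 2, …, n}, if and only if n < 2^k. -/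
section FWSAux

open Module Submodule LinearMap

variable {K : Type} [Field K]

lemma rank_le_of_ker_le {U W W' : Type*} [AddCommGroup U] [Module K U] [FiniteDimensional K U]
    [AddCommGroup W] [Module K W] [AddCommGroup W'] [Module K W']
    (f : U →ₗ[K] W) (g : U →ₗ[K] W') (h : ker g ≤ ker f) :
    finrank K (range f) ≤ finrank K (range g) := by
  have h1 := f.finrank_range_add_finrank_ker
  have h2 := g.finrank_range_add_finrank_ker
  have h3 : finrank K (ker g) ≤ finrank K (ker f) := Submodule.finrank_mono h
  omega

lemma rank_le_restrict_add {U : Type*} [AddCommGroup U] [Module K U] [FiniteDimensional K U]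
    {W : Type*} [AddCommGroup W] [Module K W]
    (f h : U →ₗ[K] W) :
    finrank K (range f) ≤ finrank K (range (f.domRestrict (ker h))) + finrank K (range h) := by
  set R : Submodule K W := range (f.domRestrict (ker h)) with hR
  let f' : U →ₗ[K] (W ⧸ R) := R.mkQ.comp f
  have hker : ker h ≤ ker f' := by
    intro x hx
    have : f x ∈ R := ⟨⟨x, hx⟩, rfl⟩
    simpa [f', LinearMap.mem_ker, Submodule.Quotient.mk_eq_zero] using this
  have h1 : finrank K (range f') ≤ finrank K (range h) := rank_le_of_ker_le f' h hker
  let ψ : range f →ₗ[K] (W ⧸ R) := R.mkQ.comp (range f).subtype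
  have hrψ : range ψ = range f' := by
    rw [show ψ = R.mkQ.comp (range f).subtype from rfl, LinearMap.range_comp,
      Submodule.range_subtype, show f' = R.mkQ.comp f from rfl, LinearMap.range_comp]
  have h2 := ψ.finrank_range_add_finrank_ker
  have h3 : finrank K (ker ψ) ≤ finrank K R := by
    have hmem : ∀ x : ker ψ, ((x : range f) : W) ∈ R := by
      intro x
      have hx : R.mkQ ((x : range f) : W) = 0 := x.2
      rwa [Submodule.mkQ_apply, Submodule.Quotient.mk_eq_zero] at hx
    let e : ker ψ →ₗ[K] R := LinearMap.codRestrict R ((range f).subtype.comp (ker ψ).subtype) hmem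
    have he : Function.Injective e := by
      intro a b hab
      have h' : ((a : range f) : W) = ((b : range f) : W) :=
        congrArg (Subtype.val : R → W) hab
      exact Subtype.ext (Subtype.ext h')
    exact LinearMap.finrank_le_finrank_of_injective he
  have h4 : finrank K (range f) = finrank K (range ψ) + finrank K (ker ψ) := h2.symm
  rw [hrψ] at h4
  omega

variable {L : Type} [Field L] [Algebra K L]

/-- Restriction of `K`-linear functionals to a subspace, as an `L`-linear map. -/
def resL {U : Type*} [AddCommGroup U] [Module K U] (U' : Submodule K U) :
    (U →ₗ[K] L) →ₗ[L] (↥U' →ₗ[K] L) where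
  toFun f := f.domRestrict U'
  map_add' f g := rfl
  map_smul' a f := rfl

lemma lemmaA (k : ℕ) : ∀ (U : Type) [AddCommGroup U] [Module K U] [FiniteDimensional K U]
    (V : Submodule L (U →ₗ[K] L)), FiniteDimensional L V → finrank L V ≤ k →
    ∀ (ε s : ℕ),
    (∀ j, 1 ≤ j → j ≤ s → j ≤ ε ∨ ∃ f, f ∈ V ∧ f ≠ 0 ∧
      finrank K (range f) ≤ j ∧ j ≤ finrank K (range f) + ε) →
    s ≤ (ε + 1) * 2 ^ k - 1 := by
  induction k with
  | zero =>
    intro U _ _ _ V fdV hV ε s hcov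
    haveI := fdV
    have hVbot : V = ⊥ := by
      have : finrank L V = 0 := le_antisymm (by simpa using hV) (Nat.zero_le _)
      exact Submodule.finrank_eq_zero.mp this
    rcases Nat.eq_zero_or_pos s with hs | hs
    · omega
    rcases hcov s hs le_rfl with h | ⟨f, hfV, hf0, _, _⟩
    · simpa using Nat.le_trans h (by omega)
    · exact absurd (by simpa [hVbot] using hfV) hf0
  | succ k ih =>
    intro U _ _ _ V fdV hV ε s hcov
    haveI := fdV
    by_cases hs : s ≤ 2 * ε + 1
    · have h2 : 2 ≤ 2 ^ (k + 1) := by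
        have := Nat.one_le_two_pow (n := k)
        calc (2:ℕ) = 2 * 1 := rfl
        _ ≤ 2 ^ k * 2 := by omega
        _ = 2 ^ (k+1) := (pow_succ 2 k).symm
      have : (ε + 1) * 2 ≤ (ε + 1) * 2 ^ (k + 1) := Nat.mul_le_mul_left _ h2
      omega
    rcases hcov (ε + 1) (by omega) (by omega) with h | ⟨f₁, hf₁V, hf₁0, hw1a, _⟩
    · omega
    set V' : Submodule L (↥(ker f₁) →ₗ[K] L) := V.map (resL (ker f₁)) with hV'
    let φ : ↥V →ₗ[L] (↥(ker f₁) →ₗ[K] L) := (resL (ker f₁)).comp V.subtype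
    have hro : range φ = V' := by
      rw [show φ = (resL (ker f₁)).comp V.subtype from rfl, LinearMap.range_comp,
        Submodule.range_subtype]
    have fdV' : FiniteDimensional L V' := by rw [← hro]; infer_instance
    have hrk : finrank L V' ≤ k := by
      have hrn := LinearMap.finrank_range_add_finrank_ker (V := ↥V) (V₂ := ↥(ker f₁) →ₗ[K] L) φ
      have hx₁ : (⟨f₁, hf₁V⟩ : ↥V) ∈ ker φ := by
        have : φ ⟨f₁, hf₁V⟩ = 0 := by
          apply LinearMap.ext
          intro u
          exact u.2
        simpa [LinearMap.mem_ker] using this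
      have hker_pos : 0 < finrank L (ker φ) := by
        refine Nat.pos_of_ne_zero fun h0 => ?_
        have hbot : ker φ = ⊥ := Submodule.finrank_eq_zero (R := L) (M := ↥V).mp h0
        have hx := hbot ▸ hx₁
        apply hf₁0
        have hc2 := congrArg Subtype.val ((Submodule.mem_bot L).mp hx)
        simpa using hc2
      have heq : finrank L V' = finrank L (range φ) := by rw [hro]
      omega
    have hcov' : ∀ j, 1 ≤ j → j ≤ s → j ≤ 2 * ε + 1 ∨ ∃ g, g ∈ V' ∧ g ≠ 0 ∧
        finrank K (range g) ≤ j ∧ j ≤ finrank K (range g) + (2 * ε + 1) := by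
      intro j hj1 hjs
      rcases hcov j hj1 hjs with h | ⟨f, hfV, hf0, ha, hb⟩
      · left; omega
      have hkey := rank_le_restrict_add (K := K) f f₁
      by_cases hg : f.domRestrict (ker f₁) = 0
      · left
        have h0 : finrank K (range (0 : ↥(ker f₁) →ₗ[K] L)) = 0 := by
          rw [LinearMap.range_zero]
          exact finrank_bot K L
        rw [hg, h0] at hkey
        omega
      · right
        refine ⟨f.domRestrict (ker f₁), ?_, hg, ?_, ?_⟩
        · exact Submodule.mem_map_of_mem hfV
        · have hle : range (f.domRestrict (ker f₁)) ≤ range f := by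
            rintro y ⟨u, rfl⟩
            exact ⟨u.1, rfl⟩
          exact le_trans (Submodule.finrank_mono hle) ha
        · omega
    have := ih (↥(ker f₁)) V' fdV' hrk (2 * ε + 1) s hcov'
    have harith : (2 * ε + 1 + 1) * 2 ^ k = (ε + 1) * 2 ^ (k + 1) := by
      rw [pow_succ]; ring
    omega

/-- A vector `c ∈ L^n` induces the `K`-linear functional `y ↦ ∑ y j • c j` on `K^n`;
this assignment is `L`-linear. -/
noncomputable def toFunc {n : ℕ} : (Fin n → L) →ₗ[L] ((Fin n → K) →ₗ[K] L) where
  toFun c :=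
    { toFun := fun y => ∑ j, y j • c j
      map_add' := fun y z => by simp [add_smul, Finset.sum_add_distrib]
      map_smul' := fun a y => by simp [mul_smul, Finset.smul_sum] }
  map_add' c d := by
    apply LinearMap.ext; intro y
    simp [smul_add, Finset.sum_add_distrib]
  map_smul' a c := by
    apply LinearMap.ext; intro y
    simp only [LinearMap.coe_mk, AddHom.coe_mk, RingHom.id_apply, LinearMap.smul_apply,
      Pi.smul_apply, Finset.smul_sum]
    exact Finset.sum_congr rfl fun j _ => (smul_comm _ _ _)

lemma toFunc_single {n : ℕ} (c : Fin n → L) (j : Fin n) :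
    toFunc (K := K) c (Pi.single j (1 : K)) = c j := by
  classical
  have h : toFunc (K := K) c (Pi.single j (1 : K))
      = ∑ j', (Pi.single j (1 : K) : Fin n → K) j' • c j' := rfl
  rw [h, Finset.sum_eq_single j]
  · simp
  · intro b _ hb
    simp [Pi.single_apply, hb]
  · simp

lemma range_toFunc {n : ℕ} (c : Fin n → L) :
    range (toFunc (K := K) c) = span K (Set.range c) := by
  apply le_antisymm
  · rintro x ⟨y, rfl⟩
    show (∑ j, y j • c j) ∈ span K (Set.range c)
    exact Submodule.sum_mem _ fun j _ =>
      Submodule.smul_mem _ _ (Submodule.subset_span (Set.mem_range_self j))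
  · rw [Submodule.span_le]
    rintro x ⟨j, rfl⟩
    exact LinearMap.mem_range.mpr ⟨Pi.single j 1, toFunc_single c j⟩

lemma toFunc_inj {n : ℕ} : Function.Injective (toFunc (K := K) (L := L) (n := n)) := by
  intro c d hcd
  funext j
  have := congrArg (fun f => f (Pi.single j (1:K))) hcd
  simpa [toFunc_single] using this

lemma necessity {n k : ℕ} (C : Submodule L (Fin n → L)) (hdim : finrank L ↥C = k)
    (hspec : weightSpectrum K C = Set.Icc 1 n) : n < 2 ^ k := by
  classical
  set V₀ : Submodule L ((Fin n → K) →ₗ[K] L) := C.map toFunc with hV₀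
  let e := Submodule.equivMapOfInjective (toFunc (K := K)) toFunc_inj C
  haveI fdV₀ : FiniteDimensional L ↥V₀ := Module.Finite.equiv e
  have hdim' : finrank L ↥V₀ ≤ k := le_of_eq (e.finrank_eq ▸ hdim)
  have hcov : ∀ j, 1 ≤ j → j ≤ n → j ≤ 0 ∨ ∃ f, f ∈ V₀ ∧ f ≠ 0 ∧
      finrank K (range f) ≤ j ∧ j ≤ finrank K (range f) + 0 := by
    intro j hj1 hjn
    have hj : j ∈ weightSpectrum K C := by
      rw [hspec]; exact ⟨hj1, hjn⟩
    obtain ⟨c, hcC, hc0, hw⟩ := hj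
    right
    refine ⟨toFunc c, Submodule.mem_map_of_mem hcC, ?_, ?_, ?_⟩
    · intro h0
      exact hc0 (toFunc_inj (by rw [h0]; exact (map_zero _).symm))
    · rw [range_toFunc]
      exact le_of_eq hw
    · rw [range_toFunc]
      have : rankWeight K c = j := hw
      rw [rankWeight] at this
      omega
  have := lemmaA (K := K) (L := L) k (Fin n → K) V₀ fdV₀ hdim' 0 n hcov
  have h1 : (1 : ℕ) ≤ 2 ^ k := Nat.one_le_two_pow
  omega

lemma cover_exists (s : ℕ → ℕ) (h0 : s 0 = 0)
    (hd : ∀ i, s (i + 1) ≤ 2 * s i + 1) :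
    ∀ i, ∀ w, w ≤ s i → ∃ T : Finset ℕ, (∀ t ∈ T, t < i) ∧
      (∑ t ∈ T, (s (t + 1) - s t)) = w := by
  intro i
  induction i with
  | zero =>
    intro w hw
    refine ⟨∅, by simp, by simp; omega⟩
  | succ i ih =>
    intro w hw
    by_cases hw' : w ≤ s i
    · obtain ⟨T, hT1, hT2⟩ := ih w hw'
      exact ⟨T, fun t ht => Nat.lt_succ_of_lt (hT1 t ht), hT2⟩
    · push_neg at hw'
      have ha : s (i + 1) - s i ≤ w := by have := hd i; omega
      obtain ⟨T, hT1, hT2⟩ := ih (w - (s (i + 1) - s i)) (by have := hd i; omega)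
      have hiT : i ∉ T := fun h => lt_irrefl i (hT1 i h)
      refine ⟨insert i T, ?_, ?_⟩
      · intro t ht
        rcases Finset.mem_insert.mp ht with rfl | ht
        · exact Nat.lt_succ_self _
        · exact Nat.lt_succ_of_lt (hT1 t ht)
      · rw [Finset.sum_insert hiT, hT2]
        omega

lemma sufficiency {n k m : ℕ} (hk1 : 1 ≤ k) (hkn : k ≤ n) (hnm : n ≤ m) (h2 : n < 2 ^ k)
    (hdeg : finrank K L = m) :
    ∃ C : Submodule L (Fin n → L), finrank L ↥C = k ∧ weightSpectrum K C = Set.Icc 1 n := by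
  classical
  haveI : FiniteDimensional K L := Module.finite_of_finrank_pos (by rw [hdeg]; omega)
  have hn' : n ≤ finrank K L := by rw [hdeg]; exact hnm
  set b := Module.finBasis K L with hb
  set γ : Fin n → L := fun j => b (Fin.castLE hn' j) with hγdef
  have hγ : LinearIndependent K γ := b.linearIndependent.comp _ (Fin.castLE_injective hn')
  have hγ0 : ∀ j, γ j ≠ 0 := fun j => hγ.ne_zero j
  -- the size function
  set s : ℕ → ℕ := fun i => min (2 ^ i - 1) (n - (k - i)) with hs
  have hpow : ∀ i : ℕ, 1 ≤ 2 ^ i := fun i => Nat.one_le_two_pow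
  have hpowS : ∀ i : ℕ, 2 ^ (i + 1) = 2 * 2 ^ i := fun i => by rw [pow_succ]; ring
  have hs0 : s 0 = 0 := by simp [hs]
  have hsk : s k = n := by simp only [hs]; omega
  have hmono : Monotone s := by
    apply monotone_nat_of_le_succ
    intro i
    have := hpow i; have := hpowS i
    simp only [hs]; omega
  have hstrict : ∀ i, i < k → s i < s (i + 1) := by
    intro i hik
    have := hpow i; have := hpowS i
    simp only [hs]; omega
  have hd : ∀ i, s (i + 1) ≤ 2 * s i + 1 := by
    intro i
    have := hpow i; have := hpowS i
    simp only [hs]; omega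
  -- the block function
  set p : Fin n → ℕ := fun j => Nat.findGreatest (fun t => s t ≤ (j : ℕ)) k with hp
  have hsp : ∀ j : Fin n, s (p j) ≤ (j : ℕ) := by
    intro j
    have h00 : s 0 ≤ (j : ℕ) := by rw [hs0]; exact Nat.zero_le _
    exact Nat.findGreatest_spec (P := fun t => s t ≤ (j : ℕ)) (Nat.zero_le k) h00
  have hplt : ∀ j : Fin n, p j < k := by
    intro j
    rcases Nat.lt_or_ge (p j) k with h | h
    · exact h
    · exfalso
      have h1 : p j ≤ k := Nat.findGreatest_le k
      have h2 : p j = k := le_antisymm h1 h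
      have := hsp j
      rw [h2, hsk] at this
      exact absurd this (Nat.not_le.mpr j.2)
  have hjlt : ∀ j : Fin n, (j : ℕ) < s (p j + 1) := by
    intro j
    by_contra hcon
    push_neg at hcon
    exact Nat.findGreatest_is_greatest (Nat.lt_succ_self _) (hplt j) hcon
  have hchar : ∀ (j : Fin n) (t : ℕ), t < k → (p j = t ↔ s t ≤ (j : ℕ) ∧ (j : ℕ) < s (t + 1)) := by
    intro j t htk
    constructor
    · rintro rfl; exact ⟨hsp j, hjlt j⟩
    · rintro ⟨h1, h2⟩
      have hge : t ≤ p j := Nat.le_findGreatest (le_of_lt htk) h1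
      have hle : p j ≤ t := by
        by_contra hcon
        push_neg at hcon
        have : s (t + 1) ≤ s (p j) := hmono hcon
        have := hsp j
        omega
      omega
  -- generators
  set h : Fin k → (Fin n → L) := fun i => fun j => if p j = (i : ℕ) then γ j else 0 with hh
  set C : Submodule L (Fin n → L) := Submodule.span L (Set.range h) with hC
  have hLI : LinearIndependent L h := by
    rw [Fintype.linearIndependent_iff]
    intro g hg i
    have hik : (i : ℕ) < k := i.2
    have hlt : s (i : ℕ) < n := by
      have h1 : s ((i : ℕ) + 1) ≤ s k := hmono hik
      have := hstrict (i : ℕ) hik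
      omega
    set j₀ : Fin n := ⟨s (i : ℕ), hlt⟩ with hj₀
    have hpj₀ : p j₀ = (i : ℕ) := by
      rw [hchar j₀ (i : ℕ) hik]
      exact ⟨le_rfl, hstrict _ hik⟩
    have := congrFun hg j₀
    simp only [Finset.sum_apply, Pi.smul_apply, hh, Pi.zero_apply] at this
    rw [Finset.sum_eq_single i] at this
    · rw [hpj₀] at this
      simp only [if_pos rfl, smul_eq_mul] at this
      rcases mul_eq_zero.mp this with h | h
      · exact h
      · exact absurd h (hγ0 j₀)
    · intro c _ hc
      rw [hpj₀]
      have : (c : ℕ) ≠ (i : ℕ) := fun hcc => hc (Fin.ext hcc)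
      simp [this.symm]
    · intro hcon
      exact absurd (Finset.mem_univ i) hcon
  have hdim : finrank L ↥C = k := by
    rw [hC, finrank_span_eq_card hLI, Fintype.card_fin]
  refine ⟨C, hdim, ?_⟩
  apply Set.eq_of_subset_of_subset
  · -- spectrum ⊆ Icc 1 n
    rintro w ⟨c, hcC, hc0, hcw⟩
    have hfin : FiniteDimensional K (span K (Set.range c)) :=
      FiniteDimensional.span_of_finite K (Set.finite_range c)
    constructor
    · have : c ≠ 0 := hc0
      have hex : ∃ j, c j ≠ 0 := by
        by_contra hcon
        push_neg at hcon
        exact hc0 (funext hcon)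
      obtain ⟨j, hj⟩ := hex
      have hnt : Nontrivial (span K (Set.range c)) := by
        refine ⟨⟨⟨c j, Submodule.subset_span (Set.mem_range_self j)⟩, 0, ?_⟩⟩
        intro hcon
        exact hj (by simpa using congrArg Subtype.val hcon)
      have : 0 < finrank K (span K (Set.range c)) := finrank_pos_iff.mpr hnt
      rw [← hcw]
      exact this
    · rw [← hcw]
      have := finrank_range_le_card (R := K) c
      simpa [rankWeight, Set.finrank, Fintype.card_fin] using this
  · -- Icc 1 n ⊆ spectrum
    rintro w ⟨hw1, hwn⟩
    obtain ⟨T, hT1, hT2⟩ := cover_exists s hs0 hd k w (by rw [hsk]; exact hwn)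
    set cT : Fin n → L := fun j => if p j ∈ T then γ j else 0 with hcT
    set J : Finset (Fin n) := Finset.univ.filter (fun j => p j ∈ T) with hJ
    -- cT is a codeword
    have hmem : cT ∈ C := by
      have hrepr : cT = ∑ i ∈ Finset.univ.filter (fun i : Fin k => (i : ℕ) ∈ T), h i := by
        funext j
        rw [Finset.sum_apply]
        by_cases hpj : p j ∈ T
        · have hi₀ : (⟨p j, hplt j⟩ : Fin k) ∈ Finset.univ.filter (fun i : Fin k => (i : ℕ) ∈ T) := by
            simp [hpj]
          rw [Finset.sum_eq_single (⟨p j, hplt j⟩ : Fin k)]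
          · simp [hh, hcT, hpj]
          · intro c hc hne
            simp only [hh]
            have : p j ≠ (c : ℕ) := by
              intro hcc
              exact hne (Fin.ext hcc.symm)
            simp [this]
          · intro hcon
            exact absurd hi₀ hcon
        · simp only [hcT, if_neg hpj]
          symm
          apply Finset.sum_eq_zero
          intro i hi
          have hiT : (i : ℕ) ∈ T := (Finset.mem_filter.mp hi).2
          have : p j ≠ (i : ℕ) := fun hcc => hpj (hcc ▸ hiT)
          simp [hh, this]
      rw [hrepr]
      exact Submodule.sum_mem _ fun i _ => Submodule.subset_span (Set.mem_range_self i)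
    -- cT is nonzero
    have hTne : T.Nonempty := by
      rcases Finset.eq_empty_or_nonempty T with rfl | hne
      · simp at hT2; omega
      · exact hne
    have hcT0 : cT ≠ 0 := by
      obtain ⟨t, ht⟩ := hTne
      have htk : t < k := hT1 t ht
      have hlt : s t < n := by
        have h1 : s (t + 1) ≤ s k := hmono htk
        have := hstrict t htk
        omega
      set j₀ : Fin n := ⟨s t, hlt⟩ with hj₀
      have hpj₀ : p j₀ = t := by
        rw [hchar j₀ t htk]
        exact ⟨le_rfl, hstrict _ htk⟩
      intro hcon
      have := congrFun hcon j₀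
      simp only [hcT, Pi.zero_apply, hpj₀, if_pos ht] at this
      exact hγ0 j₀ this
    -- weight of cT
    have hweight : rankWeight K cT = w := by
      have hspan : span K (Set.range cT) = span K (γ '' (↑J : Set (Fin n))) := by
        apply le_antisymm
        · have hsub : Set.range cT ⊆ insert 0 (γ '' (↑J : Set (Fin n))) := by
            rintro x ⟨j, rfl⟩
            by_cases hpj : p j ∈ T
            · right
              exact ⟨j, by simp [hJ, hpj], by simp [hcT, hpj]⟩
            · left
              simp [hcT, hpj]
          calc span K (Set.range cT) ≤ span K (insert 0 (γ '' (↑J : Set (Fin n)))) :=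
                Submodule.span_mono hsub
          _ = span K (γ '' (↑J : Set (Fin n))) := Submodule.span_insert_zero
        · apply Submodule.span_mono
          rintro x ⟨j, hj, rfl⟩
          have hpj : p j ∈ T := (Finset.mem_filter.mp hj).2
          exact ⟨j, by simp [hcT, hpj]⟩
      have hcard : J.card = w := by
        rw [hJ]
        rw [Finset.card_eq_sum_card_fiberwise (f := p) (s := Finset.univ.filter (fun j => p j ∈ T)) (t := T)
          (fun x hx => (Finset.mem_filter.mp hx).2)]
        rw [← hT2]
        apply Finset.sum_congr rfl
        intro t ht
        have htk : t < k := hT1 t ht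
        have hbound : ∀ x ∈ Finset.Ico (s t) (s (t + 1)), x < n := by
          intro x hx
          have h1 : s (t + 1) ≤ s k := hmono htk
          rw [hsk] at h1
          have := (Finset.mem_Ico.mp hx).2
          omega
        have hfib : (Finset.univ.filter (fun j : Fin n => p j ∈ T)).filter (fun j => p j = t)
            = Finset.attachFin (Finset.Ico (s t) (s (t + 1))) hbound := by
          ext j
          simp only [Finset.mem_filter, Finset.mem_univ, true_and, Finset.mem_attachFin,
            Finset.mem_Ico]
          constructor
          · rintro ⟨_, hpt⟩
            exact (hchar j t htk).mp hpt
          · intro hint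
            have := (hchar j t htk).mpr hint
            exact ⟨this ▸ ht, this⟩
        rw [hfib, Finset.card_attachFin, Nat.card_Ico]
      rw [rankWeight, hspan, Set.image_eq_range]
      have hind : LinearIndependent K (fun x : (↑J : Set (Fin n)) => γ (x : Fin n)) :=
        hγ.comp _ Subtype.val_injective
      rw [finrank_span_eq_card hind]
      simpa using hcard
    exact ⟨cT, hmem, hcT0, hweight⟩


end FWSAux

/-- Characterization of full weight spectrum codes, case n ≤ m: an FWS [n,k]_{q^m/q} code
(one with weight spectrum {1,…,n}) exists if and only if n < 2^k. -/
theorem exists_FWS_iff_of_le (q m n k : ℕ) (hq : IsPrimePow q)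
    (hk : 1 < k) (hkn : k < n) (hnm : n ≤ m)
    (K L : Type) [Field K] [Fintype K] [Field L] [Algebra K L]
    (hcard : Fintype.card K = q) (hdeg : Module.finrank K L = m) :
    (∃ C : Submodule L (Fin n → L), Module.finrank L C = k ∧
        weightSpectrum K C = Set.Icc 1 n) ↔ n < 2 ^ k := by
  constructor
  · rintro ⟨C, hdim, hspec⟩
    exact necessity C hdim hspec
  · intro h2
    exact sufficiency (by omega : 1 ≤ k) (le_of_lt hkn) hnm h2 hdeg
end

section
/- Let q be a prime power and let k, n, m be integers with 1 < k < n and m < n ≤ km. Set t = ⌊(km − n)/m⌋, a = n − (k − t − 2)m, and h = max{⌊a/2^{t+1}⌋, 1}. Then there exists a nondegenerate [n,k]_{q^m/q} rank-metric code C whose weight spectrum is exactly WS(C) = {h, h+1, …, m}; in particular, C has precisely m − h + 1 distinct nonzero rank weights. -/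
set_option linter.unusedVariables false

namespace RMAux

open Finset

/-- telescoping sum of successive differences of a monotone ℕ-sequence -/
lemma sum_range_sub_mono (Q : ℕ → ℕ) (hQ : ∀ i, Q i ≤ Q (i+1)) (k : ℕ) :
    ∑ i ∈ Finset.range k, (Q (i+1) - Q i) = Q k - Q 0 := by
  have hm : Monotone Q := monotone_nat_of_le_succ hQ
  induction k with
  | zero => simp
  | succ k ih =>
    rw [Finset.sum_range_succ, ih]
    have h1 : Q 0 ≤ Q k := hm (Nat.zero_le k)
    have h2 := hQ k
    omega

/-- Interval-cover lemma: given lengths `v j` (j < ℓ), all positive and `≤ w`,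
with total at least `w - c`, one can place intervals inside `[0,w)` covering `[c, w)`. -/
lemma cover_aux : ∀ (ℓ : ℕ) (v : ℕ → ℕ) (c w : ℕ), c ≤ w →
    w ≤ c + ∑ j ∈ Finset.range ℓ, v j →
    (∀ j < ℓ, 0 < v j ∧ v j ≤ w) →
    ∃ o : ℕ → ℕ, (∀ j < ℓ, o j + v j ≤ w) ∧
      (∀ e, c ≤ e → e < w → ∃ j, j < ℓ ∧ o j ≤ e ∧ e < o j + v j) := by
  intro ℓ
  induction ℓ with
  | zero =>
    intro v c w hcw hsum _
    refine ⟨fun _ => 0, by omega, fun e hce hew => ?_⟩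
    simp at hsum; omega
  | succ ℓ ih =>
    intro v c w hcw hsum hb
    have hb0 := hb 0 (Nat.succ_pos ℓ)
    set σ0 := min c (w - v 0) with hσ0
    set c' := min (c + v 0) w with hc'
    have hsum' : w ≤ c' + ∑ j ∈ Finset.range ℓ, v (j+1) := by
      rw [Finset.sum_range_succ'] at hsum; omega
    obtain ⟨o', ho1, ho2⟩ := ih (fun j => v (j+1)) c' w (by omega) hsum'
      (fun j hj => hb (j+1) (by omega))
    refine ⟨fun j => if j = 0 then σ0 else o' (j-1), ?_, ?_⟩
    · intro j hj
      by_cases h0 : j = 0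
      · simp [h0]; omega
      · simp only [h0, if_false]
        have := ho1 (j-1) (by omega)
        have hj' : j - 1 + 1 = j := by omega
        rw [hj'] at this; omega
    · intro e hce hew
      by_cases he : e < c'
      · exact ⟨0, by omega, by simp; omega⟩
      · obtain ⟨j, hj, hj1, hj2⟩ := ho2 e (by omega) hew
        refine ⟨j+1, by omega, ?_, ?_⟩ <;> simp [Nat.add_sub_cancel] <;> omega

/-- From the completeness property, every `w ∈ [h, m]` admits a prefix of parts,
all of size `≤ w`, positive, with total `≥ w`. -/
lemma exists_prefix (k n m h : ℕ) (v : ℕ → ℕ)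
    (hsum : ∑ i ∈ Finset.range k, v i = n)
    (hmem : ∀ i < k, h ≤ v i ∧ v i ≤ m)
    (hv0 : v 0 = h)
    (hcomp : ∀ i, 1 ≤ i → i < k → v i ≤ 1 + ∑ j ∈ Finset.range i, v j)
    (hpos : 1 ≤ h) (hk : 1 ≤ k) (hmn : m < n)
    (w : ℕ) (hw1 : h ≤ w) (hw2 : w ≤ m) :
    ∃ ℓ, 1 ≤ ℓ ∧ ℓ ≤ k ∧ (∀ j < ℓ, 0 < v j ∧ v j ≤ w) ∧
      w ≤ ∑ j ∈ Finset.range ℓ, v j := by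
  have hex : ∃ i, i < k ∧ w ≤ ∑ j ∈ Finset.range (i+1), v j := by
    refine ⟨k - 1, by omega, ?_⟩
    have : k - 1 + 1 = k := by omega
    rw [this, hsum]; omega
  classical
  set ℓ := Nat.find hex + 1 with hℓ
  have hmin : ∀ i < Nat.find hex, ¬ (i < k ∧ w ≤ ∑ j ∈ Finset.range (i+1), v j) :=
    fun i hi => Nat.find_min hex hi
  have hfind_lt : Nat.find hex < k := (Nat.find_spec hex).1
  have hprefix_lt : ∑ j ∈ Finset.range (Nat.find hex), v j < w := by
    rcases Nat.eq_zero_or_pos (Nat.find hex) with h0 | h0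
    · rw [h0]; simp; omega
    · have := hmin (Nat.find hex - 1) (by omega)
      have heq : Nat.find hex - 1 + 1 = Nat.find hex := by omega
      rw [heq] at this
      push_neg at this
      exact this (by omega)
  refine ⟨ℓ, by omega, by omega, ?_, (Nat.find_spec hex).2⟩
  intro j hj
  have hjk : j < k := by omega
  constructor
  · exact lt_of_lt_of_le hpos (hmem j hjk).1
  · rcases Nat.eq_zero_or_pos j with h0 | h0
    · rw [h0, hv0]; omega
    · have hc := hcomp j (by omega) hjk
      have hmono : ∑ x ∈ Finset.range j, v x ≤ ∑ x ∈ Finset.range (Nat.find hex), v x := by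
        apply Finset.sum_le_sum_of_subset
        apply Finset.range_subset_range.2; omega
      omega


open Finset

lemma two_mul_le_two_pow {t : ℕ} (ht : 3 ≤ t) : 2 * t ≤ 2 ^ t := by
  induction t, ht using Nat.le_induction with
  | base => norm_num
  | succ t ht ih => rw [pow_succ]; omega

lemma sum_two_pow (k : ℕ) : ∑ i ∈ Finset.range k, 2^i = 2^k - 1 := by
  induction k with
  | zero => simp
  | succ k ih =>
    rw [Finset.sum_range_succ, ih]
    have h1 : (1:ℕ) ≤ 2^k := Nat.one_le_two_pow
    have h2 : (2:ℕ)^(k+1) = 2^k + 2^k := by rw [pow_succ]; ring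
    omega

/-- the greedy maximal completeness sum -/
def Ubound (m k : ℕ) : ℕ := ∑ i ∈ Finset.range k, min m (2 ^ i)

lemma Ubound_succ (m k : ℕ) : Ubound m (k+1) = Ubound m k + min m (2^k) := by
  simp [Ubound, Finset.sum_range_succ]

lemma le_Ubound (m k : ℕ) (hm : 1 ≤ m) : k ≤ Ubound m k := by
  calc k = ∑ _i ∈ Finset.range k, 1 := by simp
  _ ≤ Ubound m k := Finset.sum_le_sum (fun i _ => by
        have : (1:ℕ) ≤ 2^i := Nat.one_le_two_pow
        omega)

lemma min_le_Ubound_succ (m k : ℕ) (hm : 1 ≤ m) : min m (2^k) ≤ Ubound m k + 1 := by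
  by_cases hall : ∀ i < k, 2^i < m
  · have heq : Ubound m k = ∑ i ∈ Finset.range k, 2^i := by
      apply Finset.sum_congr rfl
      intro i hi
      have := hall i (Finset.mem_range.mp hi)
      omega
    rw [heq, sum_two_pow]
    have : (1:ℕ) ≤ 2^k := Nat.one_le_two_pow
    have : min m (2^k) ≤ 2^k := min_le_right _ _
    omega
  · push_neg at hall
    obtain ⟨i, hik, hmi⟩ := hall
    have hmm : min m (2^i) = m := by omega
    have hle : m ≤ Ubound m k := by
      calc m = min m (2^i) := hmm.symm
      _ ≤ Ubound m k := Finset.single_le_sum (f := fun i => min m (2^i))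
            (fun _ _ => Nat.zero_le _) (Finset.mem_range.mpr hik)
    have : min m (2^k) ≤ m := min_le_left _ _
    omega

/-- existence of a completeness partition with minimum part 1 -/
lemma exists_parts_one (m : ℕ) (hm : 1 ≤ m) :
    ∀ k n : ℕ, 1 ≤ k → k ≤ n → n ≤ Ubound m k →
    ∃ v : ℕ → ℕ, (∑ i ∈ Finset.range k, v i = n) ∧ (∀ i < k, 1 ≤ v i ∧ v i ≤ m) ∧
      v 0 = 1 ∧ (∀ i, 1 ≤ i → i < k → v i ≤ 1 + ∑ j ∈ Finset.range i, v j) := by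
  intro k
  induction k with
  | zero => omega
  | succ k ih =>
    intro n hk1 hkn hnU
    rcases Nat.eq_zero_or_pos k with hk0 | hkpos
    · subst hk0
      have h1 : Ubound m (0+1) = 1 := by
        simp [Ubound]
        omega
      have hn1 : n = 1 := by omega
      exact ⟨fun _ => 1, by simp [hn1], fun i _ => ⟨le_refl _, hm⟩, rfl, by omega⟩
    · set vk := min m (min (n - k) ((n+1)/2)) with hvk
      have hcases : vk = m ∨ vk = n - k ∨ vk = (n+1)/2 := by
        rw [hvk]
        rcases le_total m (min (n-k) ((n+1)/2)) with h | h
        · left; exact min_eq_left h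
        · rcases le_total (n-k) ((n+1)/2) with h2 | h2
          · right; left; rw [min_eq_right h, min_eq_left h2]
          · right; right; rw [min_eq_right h, min_eq_right h2]
      have hv_m : vk ≤ m := min_le_left _ _
      have hv_nk : vk ≤ n - k := le_trans (min_le_right _ _) (min_le_left _ _)
      have hv_half : vk ≤ (n+1)/2 := le_trans (min_le_right _ _) (min_le_right _ _)
      clear_value vk
      clear hvk
      have hU := Ubound_succ m k
      have hminU := min_le_Ubound_succ m k hm
      have hmin_m : min m (2^k) ≤ m := min_le_left _ _
      have hkU := le_Ubound m k hm
      have hnd : 2 * ((n+1)/2) + 1 ≥ n + 1 := by omega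
      have hnd2 : (n+1)/2 ≤ n := by omega
      have hvk1 : 1 ≤ vk := by
        rcases hcases with h | h | h <;> omega
      have hrec1 : k ≤ n - vk := by omega
      have hUn : n ≤ Ubound m k + min m (2^k) := by omega
      have hrec2 : n - vk ≤ Ubound m k := by
        rcases hcases with h | h | h
        · omega
        · omega
        · have h2 : n ≤ 2 * Ubound m k + 1 := by omega
          omega
      obtain ⟨v', hs', hb', h0', hc'⟩ := ih (n - vk) (by omega) hrec1 hrec2
      refine ⟨fun i => if i = k then vk else v' i, ?_, ?_, ?_, ?_⟩
      · rw [Finset.sum_range_succ]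
        rw [if_pos rfl]
        have heq : ∑ i ∈ Finset.range k, (if i = k then vk else v' i)
            = ∑ i ∈ Finset.range k, v' i := by
          apply Finset.sum_congr rfl
          intro i hi
          have := Finset.mem_range.mp hi
          rw [if_neg (by omega)]
        rw [heq, hs']
        omega
      · intro i hi
        dsimp only
        by_cases hik : i = k
        · rw [if_pos hik]; omega
        · rw [if_neg hik]
          exact hb' i (by omega)
      · dsimp only
        rw [if_neg (by omega)]
        exact h0'
      · intro i hi1 hik
        dsimp only
        by_cases hikk : i = k
        · subst hikk
          rw [if_pos rfl]
          have heq : ∑ j ∈ Finset.range i, (if j = i then vk else v' j)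
              = ∑ j ∈ Finset.range i, v' j := by
            apply Finset.sum_congr rfl
            intro j hj
            have := Finset.mem_range.mp hj
            rw [if_neg (by omega)]
          rw [heq, hs']
          omega
        · have hik' : i < k := by omega
          rw [if_neg hikk]
          have heq : ∑ j ∈ Finset.range i, (if j = k then vk else v' j)
              = ∑ j ∈ Finset.range i, v' j := by
            apply Finset.sum_congr rfl
            intro j hj
            have := Finset.mem_range.mp hj
            rw [if_neg (by omega)]
          rw [heq]
          exact hc' i hi1 hik'

lemma exists_parts_main (k t x a m n h : ℕ)
    (hx : t + 1 ≤ x) (hxa : 2*x ≤ a) (hxa2 : a ≤ 2*x + 1)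
    (hk : t + 2 ≤ k) (hma : m < a) (ham : a ≤ 2*m)
    (hn : n = a + (k - t - 2) * m) (hh : h = max (x / 2^t) 1) :
    ∃ v : ℕ → ℕ, (∑ i ∈ Finset.range k, v i = n) ∧ (∀ i < k, h ≤ v i ∧ v i ≤ m) ∧
      v 0 = h ∧ (∀ i, 1 ≤ i → i < k → v i ≤ 1 + ∑ j ∈ Finset.range i, v j) := by
  have hxm : x ≤ m := by omega
  set X : ℕ → ℕ := fun j => max (x / 2^j) (t+1-j) with hX
  have hXj : ∀ j, X j = max (x / 2^j) (t+1-j) := fun j => rfl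
  have hdiv : ∀ j, x / 2^(j+1) = x / 2^j / 2 := by
    intro j
    rw [Nat.div_div_eq_div_mul, ← pow_succ]
  have hdiv2 : ∀ j, 2 * (x / 2^(j+1)) ≤ x / 2^j ∧ x / 2^j ≤ 2 * (x / 2^(j+1)) + 1 := by
    intro j
    rw [hdiv j]
    omega
  have hX0 : X 0 = x := by
    rw [hXj]
    simp
    omega
  have hXt : X t = h := by
    rw [hXj, hh]
    congr 1
    omega
  have hXub : ∀ j, X j ≤ x := by
    intro j
    rw [hXj]
    have := Nat.div_le_self x (2^j)
    omega
  have hhx : h ≤ x := by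
    rw [hh]
    have := Nat.div_le_self x (2^t)
    omega
  have key : ∀ i, i ≤ t → 2^(t-i) * (x / 2^t) ≤ x / 2^i := by
    intro i hi
    have h1 : x / 2^i / 2^(t-i) = x / 2^t := by
      rw [Nat.div_div_eq_div_mul, ← pow_add]
      congr 2
      omega
    calc 2^(t-i) * (x/2^t) = (x / 2^i / 2^(t-i)) * 2^(t-i) := by rw [h1]; ring
    _ ≤ x / 2^i := Nat.div_mul_le_self _ _
  have hXdec : ∀ j, j < t → X (j+1) < X j := by
    intro j hj
    have h1 := hXj j
    have h2 := hXj (j+1)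
    have h3 := (hdiv2 j).1
    omega
  have hXstep : ∀ j, j < t → X j ≤ 2 * X (j+1) + 1 := by
    intro j hj
    have h1 := hXj j
    have h2 := hXj (j+1)
    have h3 := (hdiv2 j).2
    omega
  have hXlow : ∀ j, j < t → h ≤ X j - X (j+1) := by
    intro j hj
    by_cases hsmall : x / 2^t ≤ 1
    · have hh1 : h = 1 := by omega
      have := hXdec j hj
      omega
    · have hh2 : h = x / 2^t := by omega
      have k1 : 2^(t-(j+1)) * (x/2^t) ≤ x/2^(j+1) := key (j+1) (by omega)
      have k2 : t - j < 2^(t-j) := Nat.lt_two_pow_self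
      have k3 : (2:ℕ)^(t-j) = 2^(t-j-1) * 2 := by
        rw [← pow_succ]
        congr 1
        omega
      have k4 : 2^(t-j-1) * 2 ≤ 2^(t-j-1) * (x/2^t) := by
        apply Nat.mul_le_mul_left
        omega
      have k5 : (1:ℕ) * (x/2^t) ≤ 2^(t-j-1) * (x/2^t) := by
        apply Nat.mul_le_mul_right
        exact Nat.one_le_two_pow
      have k6 : t - (j+1) = t - j - 1 := by omega
      rw [k6] at k1
      have h1 := hXj j
      have h2 := hXj (j+1)
      have h3 := (hdiv2 j).1
      omega
  -- the cumulative sums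
  set Q : ℕ → ℕ := fun i => if i = 0 then 0 else if i ≤ t+1 then X (t+1-i) else a + (i - (t+2)) * m
    with hQdef
  have hQ0 : Q 0 = 0 := rfl
  have hQmid : ∀ i, 1 ≤ i → i ≤ t+1 → Q i = X (t+1-i) := by
    intro i h1 h2
    simp only [hQdef]
    rw [if_neg (by omega), if_pos (by omega)]
  have hQhigh : ∀ i, t+2 ≤ i → Q i = a + (i - (t+2)) * m := by
    intro i h1
    simp only [hQdef]
    rw [if_neg (by omega), if_neg (by omega)]
  have hsucc_mul : ∀ i, t+2 ≤ i → (i+1 - (t+2)) * m = (i - (t+2)) * m + m := by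
    intro i h1
    rw [show i+1-(t+2) = (i-(t+2))+1 by omega, Nat.succ_mul]
  have hQmono : ∀ i, Q i ≤ Q (i+1) := by
    intro i
    rcases Nat.eq_zero_or_pos i with h0 | hpos
    · subst h0
      rw [hQ0, hQmid 1 le_rfl (by omega)]
      omega
    · by_cases hi1 : i ≤ t
      · rw [hQmid i hpos (by omega), hQmid (i+1) (by omega) (by omega)]
        have := hXdec (t - i) (by omega)
        have e1 : t + 1 - i = (t - i) + 1 := by omega
        have e2 : t + 1 - (i+1) = t - i := by omega
        rw [e1, e2]
        omega
      · by_cases hi2 : i = t+1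
        · subst hi2
          rw [hQmid (t+1) (by omega) le_rfl, hQhigh (t+2) le_rfl]
          have e : t + 1 - (t+1) = 0 := by omega
          rw [e, hX0]
          simp
          omega
        · have h2 : t+2 ≤ i := by omega
          rw [hQhigh i h2, hQhigh (i+1) (by omega), hsucc_mul i h2]
          omega
  have hQsum : ∀ i, ∑ j ∈ Finset.range i, (Q (j+1) - Q j) = Q i := by
    intro i
    rw [sum_range_sub_mono Q hQmono i, hQ0]
    omega
  refine ⟨fun i => Q (i+1) - Q i, ?_, ?_, ?_, ?_⟩
  · rw [hQsum k, hQhigh k hk, hn]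
    have e : k - (t+2) = k - t - 2 := by omega
    rw [e]
  · intro i hik
    dsimp only
    rcases Nat.eq_zero_or_pos i with h0 | hpos
    · subst h0
      rw [hQ0, hQmid 1 le_rfl (by omega)]
      have e : t + 1 - 1 = t := by omega
      rw [e, hXt]
      constructor
      · omega
      · have := hXub t
        omega
    · by_cases hi1 : i ≤ t
      · rw [hQmid i hpos (by omega), hQmid (i+1) (by omega) (by omega)]
        have e1 : t + 1 - i = (t - i) + 1 := by omega
        have e2 : t + 1 - (i+1) = t - i := by omega
        rw [e1, e2]
        have hl := hXlow (t-i) (by omega)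
        have hu := hXub (t-i)
        have hd := hXdec (t-i) (by omega)
        constructor
        · omega
        · omega
      · by_cases hi2 : i = t+1
        · subst hi2
          rw [hQmid (t+1) (by omega) le_rfl, hQhigh (t+2) le_rfl]
          have e : t + 1 - (t+1) = 0 := by omega
          rw [e, hX0]
          simp
          omega
        · have h2 : t+2 ≤ i := by omega
          rw [hQhigh i h2, hQhigh (i+1) (by omega), hsucc_mul i h2]
          omega
  · dsimp only
    rw [hQ0, hQmid 1 le_rfl (by omega)]
    have e : t + 1 - 1 = t := by omega
    rw [e, hXt]
    omega
  · intro i h1 hik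
    dsimp only
    rw [hQsum i]
    by_cases hi1 : i ≤ t
    · rw [hQmid i h1 (by omega), hQmid (i+1) (by omega) (by omega)]
      have e1 : t + 1 - i = (t - i) + 1 := by omega
      have e2 : t + 1 - (i+1) = t - i := by omega
      rw [e1, e2]
      have := hXstep (t-i) (by omega)
      omega
    · by_cases hi2 : i = t+1
      · subst hi2
        rw [hQmid (t+1) (by omega) le_rfl, hQhigh (t+2) le_rfl]
        have e : t + 1 - (t+1) = 0 := by omega
        rw [e, hX0]
        simp
        omega
      · have h2 : t+2 ≤ i := by omega
        rw [hQhigh i h2, hQhigh (i+1) (by omega), hsucc_mul i h2]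
        omega

lemma exists_parts (m n k t a h : ℕ)
    (hk : 1 < k) (hkn : k < n) (hmn : m < n) (hkm : n ≤ k * m)
    (ht : t = (k * m - n) / m) (ha : a = n - (k - t - 2) * m)
    (hh : h = max (a / 2 ^ (t + 1)) 1) :
    (2 ≤ m) ∧ (1 ≤ h) ∧ (h ≤ m) ∧
    ∃ v : ℕ → ℕ, (∑ i ∈ Finset.range k, v i = n) ∧ (∀ i < k, h ≤ v i ∧ v i ≤ m) ∧
      v 0 = h ∧ (∀ i, 1 ≤ i → i < k → v i ≤ 1 + ∑ j ∈ Finset.range i, v j) := by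
  -- basic arithmetic
  have hm2 : 2 ≤ m := by
    rcases m with _ | _ | m
    · simp at hkm; omega
    · simp at hkm; omega
    · omega
  have hmpos : 0 < m := by omega
  -- division facts
  have hDdm := Nat.div_add_mod (k*m - n) m
  set r := (k*m - n) % m with hr
  have hrm : r < m := Nat.mod_lt _ hmpos
  have htk : t + 2 ≤ k := by
    have e1 : (k-1)*m + m = k*m := by
      rw [← Nat.succ_mul]
      congr 1
      omega
    have hDlt : k*m - n < (k-1)*m := by omega
    have : (k*m - n)/m < k - 1 := by
      rw [Nat.div_lt_iff_lt_mul hmpos]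
      calc k*m - n < (k-1)*m := hDlt
      _ ≤ (k-1)*m := le_rfl
    omega
  have e2 : (k - t - 2)*m + (t+2)*m = k*m := by
    rw [← Nat.add_mul]
    congr 1
    omega
  have e3 : (t+2)*m = t*m + 2*m := by rw [Nat.add_mul]
  have e4 : m * ((k*m-n)/m) = t*m := by rw [← ht, Nat.mul_comm]
  rw [e4] at hDdm
  -- key identities
  have haval : a = 2*m - r := by omega
  have hma : m < a := by omega
  have ham : a ≤ 2*m := by omega
  have hn : n = a + (k - t - 2) * m := by omega
  -- h bounds
  have hh1 : 1 ≤ h := by omega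
  have hposp : (0:ℕ) < 2^(t+1) := Nat.pow_pos (by norm_num)
  have hdivle : a / 2^(t+1) ≤ a / 2 := by
    apply Nat.div_le_div_left _ (by norm_num)
    calc (2:ℕ) = 2^1 := by norm_num
    _ ≤ 2^(t+1) := Nat.pow_le_pow_right (by norm_num) (by omega)
  have hhm : h ≤ m := by
    have : a / 2 ≤ m := by omega
    omega
  refine ⟨hm2, hh1, hhm, ?_⟩
  set x := a / 2 with hx
  have hxa : 2*x ≤ a ∧ a ≤ 2*x + 1 := by omega
  have hxt : a / 2^(t+1) = x / 2^t := by
    rw [hx, Nat.div_div_eq_div_mul]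
    congr 1
    rw [pow_succ']
  by_cases hcase : t + 1 ≤ x
  · exact exists_parts_main k t x a m n h hcase hxa.1 hxa.2 htk hma ham hn (by rw [hh, hxt])
  · -- degenerate case
    have hxle : x ≤ t := by omega
    have hxpos : 1 ≤ x := by omega
    have htpos : 1 ≤ t := by omega
    have hxlt : x < 2^t := lt_of_le_of_lt hxle (Nat.lt_two_pow_self (n := t))
    have hzero : x / 2^t = 0 := Nat.div_eq_of_lt hxlt
    have hhone : h = 1 := by
      rw [hh, hxt, hzero]
      omega
    have hm2t : m ≤ 2*t := by omega
    have hm2pt : m ≤ 2^t := by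
      rcases Nat.lt_or_ge t 3 with h3 | h3
      · interval_cases t <;> omega
      · calc m ≤ 2*t := hm2t
        _ ≤ 2^t := two_mul_le_two_pow h3
    have hUb : n ≤ Ubound m k := by
      have hsplit : Ubound m (t+2) + ∑ i ∈ Finset.Ico (t+2) k, min m (2^i) = Ubound m k := by
        simp only [Ubound, Finset.range_eq_Ico]
        exact Finset.sum_Ico_consecutive _ (by omega) (by omega)
      have hhigh : ∑ i ∈ Finset.Ico (t+2) k, min m (2^i) = (k - (t+2)) * m := by
        have hcongr : ∀ i ∈ Finset.Ico (t+2) k, min m (2^i) = m := by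
          intro i hi
          have hi' := Finset.mem_Ico.mp hi
          have : m ≤ 2^i := le_trans hm2pt (Nat.pow_le_pow_right (by norm_num) (by omega))
          omega
        rw [Finset.sum_congr rfl hcongr, Finset.sum_const, Nat.card_Ico, smul_eq_mul]
      have hlow : 2*m ≤ Ubound m (t+2) := by
        have u1 : Ubound m (t+2) = Ubound m (t+1) + min m (2^(t+1)) := Ubound_succ m (t+1)
        have u2 : Ubound m (t+1) = Ubound m t + min m (2^t) := Ubound_succ m t
        have c1 : min m (2^(t+1)) = m := by
          have : m ≤ 2^(t+1) := le_trans hm2pt (Nat.pow_le_pow_right (by norm_num) (by omega))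
          omega
        have c2 : min m (2^t) = m := by omega
        omega
      have e5 : (k - (t+2)) * m = (k - t - 2) * m := by rw [Nat.sub_sub]
      calc n = a + (k - t - 2) * m := hn
      _ ≤ 2*m + (k - t - 2) * m := by omega
      _ ≤ Ubound m (t+2) + (k - (t+2)) * m := by rw [e5]; omega
      _ = Ubound m k := by rw [← hhigh]; exact hsplit
    obtain ⟨v, h1, h2, h3, h4⟩ := exists_parts_one m (by omega) k n (by omega) (by omega) hUb
    exact ⟨v, h1, by rw [hhone]; exact h2, by rw [hhone]; exact h3, h4⟩

end RMAux


/-- Theorem (construction, case n > m): there exists a nondegenerate [n,k]_{q^m/q} code whose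
weight spectrum is exactly {h, h+1, …, m}, where t = ⌊(km−n)/m⌋, a = n − (k−t−2)m and
h = max{⌊a/2^{t+1}⌋, 1}. -/
theorem exists_code_weightSpectrum_Icc_of_gt (q m n k t a h : ℕ) (hq : IsPrimePow q)
    (hk : 1 < k) (hkn : k < n) (hmn : m < n) (hkm : n ≤ k * m)
    (ht : t = (k * m - n) / m) (ha : a = n - (k - t - 2) * m)
    (hh : h = max (a / 2 ^ (t + 1)) 1)
    (K L : Type) [Field K] [Fintype K] [Field L] [Algebra K L]
    (hcard : Fintype.card K = q) (hdeg : Module.finrank K L = m) :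
    ∃ C : Submodule L (Fin n → L), Module.finrank L C = k ∧ IsNondegenerate K C ∧
      weightSpectrum K C = Set.Icc h m ∧
      (weightSpectrum K C).ncard = m - h + 1 := by
  classical
  obtain ⟨hm2, hh1, hhm, v, hsum, hbounds, hv0, hcomp⟩ :=
    RMAux.exists_parts m n k t a h hk hkn hmn hkm ht ha hh
  have hkpos : 0 < k := by omega
  -- finite dimensionality and power basis
  haveI hfd : FiniteDimensional K L :=
    FiniteDimensional.of_finrank_pos (by rw [hdeg]; omega)
  haveI : Algebra.IsAlgebraic K L := Algebra.IsAlgebraic.of_finite K L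
  let pb : PowerBasis K L := Field.powerBasisOfFiniteOfSeparable K L
  set α : L := pb.gen with hαdef
  have hdim : pb.dim = m := by rw [← hdeg, pb.finrank]
  -- monomial independence
  have hmono : ∀ s : ℕ, s ≤ m → LinearIndependent K (fun p : Fin s => α ^ (p : ℕ)) := by
    intro s hs
    have hsd : s ≤ pb.dim := by omega
    have h1 := pb.basis.linearIndependent.comp (Fin.castLE hsd) (Fin.castLE_injective _)
    have h2 : (⇑pb.basis ∘ Fin.castLE hsd) = fun p : Fin s => α ^ (p : ℕ) := by
      funext p
      rw [Function.comp_apply, pb.coe_basis]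
      rfl
    rwa [h2] at h1
  have hα0 : α ≠ 0 := by
    have h2 := (hmono 2 hm2).ne_zero ⟨1, by norm_num⟩
    simpa using h2
  -- the sigma-type indexing of columns
  have hcardsig : Fintype.card ((i : Fin k) × Fin (v i)) = n := by
    rw [Fintype.card_sigma]
    simp only [Fintype.card_fin]
    rw [Fin.sum_univ_eq_sum_range]
    exact hsum
  set E : ((i : Fin k) × Fin (v i)) ≃ Fin n := Fintype.equivFinOfCardEq hcardsig with hEdef
  set g : Fin k → (Fin n → L) :=
    fun i j => if (E.symm j).1 = i then α ^ (((E.symm j).2 : ℕ)) else 0 with hgdef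
  set C : Submodule L (Fin n → L) := Submodule.span L (Set.range g) with hCdef
  -- evaluation of codewords
  have heval : ∀ (lam : Fin k → L) (s : (i : Fin k) × Fin (v i)),
      (∑ i, lam i • g i) (E s) = lam s.1 * α ^ ((s.2 : ℕ)) := by
    intro lam s
    rw [Finset.sum_apply]
    have hterm : ∀ i, (lam i • g i) (E s) = if s.1 = i then lam i * α ^ ((s.2 : ℕ)) else 0 := by
      intro i
      have hE : E.symm (E s) = s := Equiv.symm_apply_apply E s
      simp only [Pi.smul_apply, smul_eq_mul, hgdef]
      rw [hE]
      by_cases hsi : s.1 = i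
      · rw [if_pos hsi, if_pos hsi]
      · rw [if_neg hsi, if_neg hsi, mul_zero]
    rw [Finset.sum_congr rfl (fun i _ => hterm i), Finset.sum_ite_eq]
    simp
  have hrange : ∀ lam : Fin k → L,
      Set.range (∑ i, lam i • g i)
        = Set.range (fun s : (i : Fin k) × Fin (v i) => lam s.1 * α ^ ((s.2 : ℕ))) := by
    intro lam
    ext y
    constructor
    · rintro ⟨j, rfl⟩
      refine ⟨E.symm j, ?_⟩
      dsimp only
      rw [← heval lam (E.symm j), Equiv.apply_symm_apply]
    · rintro ⟨s, rfl⟩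
      exact ⟨E s, heval lam s⟩
  have hmem : ∀ lam : Fin k → L, (∑ i, lam i • g i) ∈ C := fun lam =>
    Submodule.sum_mem _ (fun i _ => Submodule.smul_mem _ _ (Submodule.subset_span ⟨i, rfl⟩))
  -- weight upper bound
  have hUB : ∀ c : Fin n → L, rankWeight K c ≤ m := by
    intro c
    rw [rankWeight, ← hdeg]
    exact Submodule.finrank_le _
  -- weight lower bound
  have hLB : ∀ (lam : Fin k → L) (i0 : Fin k), lam i0 ≠ 0 →
      v i0 ≤ rankWeight K (∑ i, lam i • g i) := by
    intro lam i0 hne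
    have hvm : v i0 ≤ m := (hbounds i0 i0.isLt).2
    have hli : LinearIndependent K (fun p : Fin (v i0) => lam i0 * α ^ (p : ℕ)) := by
      have h1 := (hmono (v i0) hvm).map' (LinearMap.mulLeft K (lam i0))
        (LinearMap.ker_eq_bot.mpr (mul_right_injective₀ hne))
      have h2 : (⇑(LinearMap.mulLeft K (lam i0)) ∘ fun p : Fin (v i0) => α ^ (p:ℕ))
          = fun p : Fin (v i0) => lam i0 * α ^ (p : ℕ) := by
        funext p
        simp [LinearMap.mulLeft_apply]
      rwa [h2] at h1
    have hsub : Submodule.span K (Set.range (fun p : Fin (v i0) => lam i0 * α ^ (p:ℕ)))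
        ≤ Submodule.span K (Set.range (∑ i, lam i • g i)) := by
      apply Submodule.span_mono
      rw [hrange lam]
      rintro y ⟨p, rfl⟩
      exact ⟨⟨i0, p⟩, rfl⟩
    calc v i0 = Module.finrank K (Submodule.span K
          (Set.range (fun p : Fin (v i0) => lam i0 * α ^ (p:ℕ)))) := by
          rw [finrank_span_eq_card hli, Fintype.card_fin]
    _ ≤ rankWeight K (∑ i, lam i • g i) := Submodule.finrank_mono hsub
  -- witnesses of each weight
  have hwitness : ∀ w : ℕ, h ≤ w → w ≤ m → ∃ c ∈ C, c ≠ 0 ∧ rankWeight K c = w := by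
    intro w hw1 hw2
    obtain ⟨ℓ, hl1, hlk, hsmall, hbig⟩ :=
      RMAux.exists_prefix k n m h v hsum hbounds hv0 hcomp hh1 (by omega) hmn w hw1 hw2
    obtain ⟨o, ho1, ho2⟩ := RMAux.cover_aux ℓ v 0 w (by omega) (by simpa using hbig) hsmall
    set lam : Fin k → L := fun i => if (i : ℕ) < ℓ then α ^ (o (i : ℕ)) else 0 with hlamdef
    have hvpos0 : 0 < v 0 := by have := (hbounds 0 hkpos).1; omega
    refine ⟨∑ i, lam i • g i, hmem lam, ?_, ?_⟩
    · intro h0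
      have hz := congrFun h0 (E ⟨⟨0, hkpos⟩, ⟨0, hvpos0⟩⟩)
      rw [heval] at hz
      simp only [hlamdef] at hz
      rw [if_pos (by show (0:ℕ) < ℓ; omega)] at hz
      simp only [pow_zero, mul_one, Pi.zero_apply] at hz
      exact (pow_ne_zero _ hα0) hz
    · rw [rankWeight, hrange lam]
      have hspan : Submodule.span K
            (Set.range (fun s : (i : Fin k) × Fin (v i) => lam s.1 * α ^ ((s.2 : ℕ))))
          = Submodule.span K (Set.range (fun p : Fin w => α ^ (p : ℕ))) := by
        apply le_antisymm
        · rw [Submodule.span_le]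
          rintro y ⟨s, rfl⟩
          simp only [hlamdef]
          by_cases hc : ((s.1 : ℕ)) < ℓ
          · rw [if_pos hc, ← pow_add]
            have hlt : o (s.1 : ℕ) + (s.2 : ℕ) < w := by
              have h1 := ho1 (s.1 : ℕ) hc
              have h2 := s.2.isLt
              omega
            exact Submodule.subset_span ⟨⟨o (s.1 : ℕ) + (s.2 : ℕ), hlt⟩, rfl⟩
          · rw [if_neg hc, zero_mul]
            exact Submodule.zero_mem _
        · rw [Submodule.span_le]
          rintro y ⟨p, rfl⟩
          obtain ⟨j, hjl, hj1, hj2⟩ := ho2 (p : ℕ) (Nat.zero_le _) p.isLt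
          have hjk : j < k := by omega
          refine Submodule.subset_span ⟨⟨⟨j, hjk⟩, ⟨(p : ℕ) - o j, (by omega : (p : ℕ) - o j < v j)⟩⟩, ?_⟩
          simp only [hlamdef]
          rw [if_pos (by simpa using hjl), ← pow_add]
          congr 1
          omega
      rw [hspan, finrank_span_eq_card (hmono w hw2), Fintype.card_fin]
  -- nondegeneracy
  have hnd : IsNondegenerate K C := by
    intro xx hxx
    have hex : ∃ j, xx j ≠ 0 := by
      by_contra hno
      push_neg at hno
      exact hxx (funext hno)
    obtain ⟨j0, hj0⟩ := hex
    set s0 := E.symm j0 with hs0def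
    refine ⟨g s0.1, Submodule.subset_span ⟨s0.1, rfl⟩, ?_⟩
    rw [← Equiv.sum_comp E (fun j => xx j • g s0.1 j)]
    have hterm : ∀ s : (i : Fin k) × Fin (v i),
        xx (E s) • g s0.1 (E s) = if s.1 = s0.1 then xx (E s) • α ^ ((s.2 : ℕ)) else 0 := by
      intro s
      have hE : E.symm (E s) = s := Equiv.symm_apply_apply E s
      simp only [hgdef]
      rw [hE]
      by_cases hss : s.1 = s0.1
      · rw [if_pos hss, if_pos hss]
      · rw [if_neg hss, if_neg hss, smul_zero]
    rw [Finset.sum_congr rfl (fun s _ => hterm s)]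
    rw [← Finset.univ_sigma_univ, Finset.sum_sigma]
    have hout : ∀ i : Fin k,
        (∑ p : Fin (v i), if i = s0.1 then xx (E ⟨i, p⟩) • α ^ ((p : ℕ)) else 0)
        = if i = s0.1 then (∑ p : Fin (v i), xx (E ⟨i, p⟩) • α ^ ((p : ℕ))) else 0 := by
      intro i
      split_ifs <;> simp
    rw [Finset.sum_congr rfl (fun i _ => hout i), Finset.sum_ite_eq']
    simp only [Finset.mem_univ, if_pos]
    intro hzero
    have hli := Fintype.linearIndependent_iff.mp (hmono (v s0.1) ((hbounds s0.1 s0.1.isLt).2))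
    have hcz := hli (fun p => xx (E ⟨s0.1, p⟩)) hzero s0.2
    rw [Sigma.eta, Equiv.apply_symm_apply] at hcz
    exact hj0 hcz
  -- dimension
  have hgli : LinearIndependent L g := by
    rw [Fintype.linearIndependent_iff]
    intro c hcc i
    have hvpos : 0 < v i := by have := (hbounds i i.isLt).1; omega
    have hz := congrFun hcc (E ⟨i, ⟨0, hvpos⟩⟩)
    rw [heval c ⟨i, ⟨0, hvpos⟩⟩] at hz
    simpa using hz
  have hfr : Module.finrank L C = k := by
    rw [hCdef, finrank_span_eq_card hgli, Fintype.card_fin]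
  -- spectrum
  have hspec : weightSpectrum K C = Set.Icc h m := by
    ext w
    simp only [weightSpectrum, Set.mem_setOf_eq, Set.mem_Icc]
    constructor
    · rintro ⟨c, hcC, hc0, rfl⟩
      rw [hCdef] at hcC
      obtain ⟨lam, hl⟩ := (Submodule.mem_span_range_iff_exists_fun L).mp hcC
      have hlam0 : ∃ i0, lam i0 ≠ 0 := by
        by_contra hno
        push_neg at hno
        apply hc0
        rw [← hl]
        apply Finset.sum_eq_zero
        intro i _
        rw [hno i, zero_smul]
      obtain ⟨i0, hi0⟩ := hlam0
      constructor
      · calc h ≤ v i0 := (hbounds i0 i0.isLt).1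
        _ ≤ rankWeight K c := by rw [← hl]; exact hLB lam i0 hi0
      · exact hUB c
    · intro hw
      obtain ⟨c, h1, h2, h3⟩ := hwitness w hw.1 hw.2
      exact ⟨c, h1, h2, h3⟩
  refine ⟨C, hfr, hnd, hspec, ?_⟩
  rw [hspec, ← Finset.coe_Icc, Set.ncard_coe_finset, Nat.card_Icc]
  omega
end

section
/- Let k, m, n be integers with m < n ≤ km, set t = ⌊(km − n)/m⌋ and a = n − (k − t − 2)m, and let h = max{⌊a/2^{t+1}⌋, 1}; assume h > 1. Let S be a subset of {1, …, m} with |S| ≥ m − h + 2. Then there exist t+2 elements s_0 < s_1 < ⋯ < s_{t+1} of S such that, for every j with 1 ≤ j ≤ t+1, both s_0 + (2^{j−1} − 1)h + 1 ≤ s_j ≤ 2^{j−1}h and s_j > s_0 + s_1 + ⋯ + s_{j−1} hold. -/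
/-- Combinatorial lemma (case n > m): with t = ⌊(km−n)/m⌋, a = n − (k−t−2)m,
h = max{⌊a/2^{t+1}⌋, 1} > 1, any S ⊆ {1,…,m} with |S| ≥ m − h + 2 contains t+2 elements
s_0 < s_1 < ⋯ < s_{t+1} with s_0 + (2^{j−1} − 1)h + 1 ≤ s_j ≤ 2^{j−1}h and
s_j > s_0 + ⋯ + s_{j−1} for all 1 ≤ j ≤ t+1. -/
theorem exists_chain_of_large_subset (k m n t a h : ℕ) (hmn : m < n) (hkm : n ≤ k * m)
    (ht : t = (k * m - n) / m) (ha : a = n - (k - t - 2) * m)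
    (hh : h = max (a / 2 ^ (t + 1)) 1) (hh1 : 1 < h)
    (S : Finset ℕ) (hS : S ⊆ Finset.Icc 1 m) (hcard : m - h + 2 ≤ S.card) :
    ∃ e : ℕ → ℕ, (∀ i ≤ t + 1, e i ∈ S) ∧
      (∀ i j, i < j → j ≤ t + 1 → e i < e j) ∧
      (∀ j, 1 ≤ j → j ≤ t + 1 →
        e 0 + (2 ^ (j - 1) - 1) * h + 1 ≤ e j ∧ e j ≤ 2 ^ (j - 1) * h ∧
        (∑ i ∈ Finset.range j, e i) < e j) := by
  have hm0 : 0 < m := by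
    rcases Nat.eq_zero_or_pos m with rfl | h; · simp at hkm; omega
    · exact h
  -- t * m ≤ k * m - n
  have htm : t * m ≤ k * m - n := by rw [ht]; exact Nat.div_mul_le_self _ _
  have htm' : t * m + n ≤ k * m := by omega
  -- t + 2 ≤ k
  have hkt : t + 2 ≤ k := by
    have h1 : (t + 1) * m < k * m := by
      have : (t + 1) * m = t * m + m := by ring
      omega
    have := Nat.lt_of_mul_lt_mul_right h1
    omega
  -- a ≤ 2 * m
  have ha2m : a ≤ 2 * m := by
    have hsplit : (k - t) * m = (k - t - 2) * m + 2 * m := by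
      set c := k - t - 2 with hc
      have hct : k - t = c + 2 := by omega
      rw [hct, Nat.add_mul]
    have hn : n ≤ (k - t) * m := by
      have : (k - t) * m + t * m = k * m := by
        have : k - t + t = k := by omega
        calc (k - t) * m + t * m = (k - t + t) * m := by ring
          _ = k * m := by rw [this]
      omega
    omega
  -- h = a / 2^(t+1), 2 ≤ h
  have hhd : h = a / 2 ^ (t + 1) := by omega
  have h2h : 2 ≤ h := hh1
  have hda : 2 ^ (t + 1) * h ≤ a := by
    rw [hhd, mul_comm]; exact Nat.div_mul_le_self _ _
  have hthm : 2 ^ t * h ≤ m := by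
    have : 2 ^ (t + 1) * h = 2 * (2 ^ t * h) := by ring
    omega
  have hhm : h ≤ m := by
    have h1 : 1 ≤ 2 ^ t := Nat.one_le_two_pow
    have : 1 * h ≤ 2 ^ t * h := Nat.mul_le_mul_right h h1
    omega
  have hcardm : S.card ≤ m := by
    have := Finset.card_le_card hS
    simpa using this
  have hSne : S.Nonempty := by
    rw [← Finset.card_pos]; omega
  set s0 := S.min' hSne with hs0def
  have hs0S : s0 ∈ S := S.min'_mem hSne
  have hs0I := hS hs0S
  rw [Finset.mem_Icc] at hs0I
  -- s0 < h
  have hs0h : s0 < h := by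
    have hsub : S ⊆ Finset.Icc s0 m := by
      intro x hx
      rw [Finset.mem_Icc]
      exact ⟨S.min'_le x hx, (Finset.mem_Icc.mp (hS hx)).2⟩
    have := Finset.card_le_card hsub
    rw [Nat.card_Icc] at this
    omega
  -- complement bound
  have hcomp : (Finset.Icc 1 m \ S).card ≤ h - 2 := by
    rw [Finset.card_sdiff_of_subset hS, Nat.card_Icc]
    omega
  -- key existence
  have key : ∀ j : ℕ, ∃ x, 1 ≤ j → j ≤ t + 1 →
      x ∈ S ∧ s0 + (2 ^ (j - 1) - 1) * h + 1 ≤ x ∧ x ≤ 2 ^ (j - 1) * h := by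
    intro j
    by_cases hj : 1 ≤ j ∧ j ≤ t + 1
    · obtain ⟨hj1, hj2⟩ := hj
      set P := 2 ^ (j - 1) with hP
      have hP1 : 1 ≤ P := Nat.one_le_two_pow
      have hPt : P ≤ 2 ^ t := Nat.pow_le_pow_right (by norm_num) (by omega)
      have hPU : P * h ≤ m := le_trans (Nat.mul_le_mul_right h hPt) hthm
      have hPh : (P - 1) * h + h = P * h := by
        have : (P - 1) * h = P * h - h := by rw [Nat.sub_one_mul]
        have hle : h ≤ P * h := by
          calc h = 1 * h := (one_mul h).symm
            _ ≤ P * h := Nat.mul_le_mul_right h hP1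
        omega
      set L := s0 + (P - 1) * h + 1 with hL
      set U := P * h with hU
      have hne : (Finset.Icc L U ∩ S).Nonempty := by
        by_contra hemp
        rw [Finset.not_nonempty_iff_eq_empty] at hemp
        have hsub1 : Finset.Icc L U ⊆ Finset.Icc 1 m \ S := by
          intro x hx
          rw [Finset.mem_Icc] at hx
          rw [Finset.mem_sdiff, Finset.mem_Icc]
          refine ⟨⟨by omega, by omega⟩, ?_⟩
          intro hxS
          have : x ∈ Finset.Icc L U ∩ S := by
            rw [Finset.mem_inter, Finset.mem_Icc]; exact ⟨⟨hx.1, hx.2⟩, hxS⟩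
          rw [hemp] at this; simp at this
        have hsub2 : Finset.Icc 1 (s0 - 1) ⊆ Finset.Icc 1 m \ S := by
          intro x hx
          rw [Finset.mem_Icc] at hx
          rw [Finset.mem_sdiff, Finset.mem_Icc]
          refine ⟨⟨hx.1, by omega⟩, ?_⟩
          intro hxS
          have := S.min'_le x hxS
          omega
        have hdisj : Disjoint (Finset.Icc 1 (s0 - 1)) (Finset.Icc L U) := by
          rw [Finset.disjoint_left]
          intro x hx1 hx2
          rw [Finset.mem_Icc] at hx1 hx2
          omega
        have hun : Finset.Icc 1 (s0 - 1) ∪ Finset.Icc L U ⊆ Finset.Icc 1 m \ S :=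
          Finset.union_subset hsub2 hsub1
        have hcardun := Finset.card_le_card hun
        rw [Finset.card_union_of_disjoint hdisj, Nat.card_Icc, Nat.card_Icc] at hcardun
        omega
      obtain ⟨x, hx⟩ := hne
      rw [Finset.mem_inter, Finset.mem_Icc] at hx
      exact ⟨x, fun _ _ => ⟨hx.2, hx.1.1, hx.1.2⟩⟩
    · exact ⟨0, fun h1 h2 => absurd ⟨h1, h2⟩ hj⟩
  choose f hf using key
  refine ⟨fun j => if j = 0 then s0 else f j, ?_, ?_, ?_⟩
  · intro i hi
    by_cases h0 : i = 0
    · simp [h0, hs0S]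
    · simp only [h0, if_false]
      exact (hf i (by omega) hi).1
  · intro i j hij hj
    have hj0 : j ≠ 0 := by omega
    obtain ⟨hfS, hfL, hfU⟩ := hf j (by omega) hj
    by_cases h0 : i = 0
    · simp only [h0, if_true, hj0, if_false]
      have : 0 ≤ (2 ^ (j - 1) - 1) * h := Nat.zero_le _
      omega
    · simp only [h0, hj0, if_false]
      obtain ⟨hfS', hfL', hfU'⟩ := hf i (by omega) (by omega)
      -- f i ≤ 2^(i-1) * h ≤ (2^(j-1) - 1) * h < f j
      have hle : 2 ^ (i - 1) * h ≤ (2 ^ (j - 1) - 1) * h := by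
        apply Nat.mul_le_mul_right
        have h1 : 2 ^ (i - 1) * 2 ≤ 2 ^ (j - 1) := by
          calc 2 ^ (i - 1) * 2 = 2 ^ (i - 1 + 1) := by ring
            _ ≤ 2 ^ (j - 1) := Nat.pow_le_pow_right (by norm_num) (by omega)
        omega
      omega
  · intro j hj1 hj2
    have hj0 : j ≠ 0 := by omega
    obtain ⟨hfS, hfL, hfU⟩ := hf j hj1 hj2
    simp only [hj0, if_false]
    refine ⟨by simpa using hfL, hfU, ?_⟩
    -- sum bound by induction
    have hsum : ∀ l, 1 ≤ l → l ≤ t + 1 →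
        (∑ i ∈ Finset.range l, (if i = 0 then s0 else f i)) ≤ s0 + (2 ^ (l - 1) - 1) * h := by
      intro l
      induction l with
      | zero => omega
      | succ p ih =>
        intro _ hlt
        by_cases hp : p = 0
        · subst hp; simp
        · have hps := ih (by omega) (by omega)
          rw [Finset.sum_range_succ]
          have ⟨_, _, hpU⟩ := hf p (by omega) (by omega)
          simp only [hp, if_false]
          have harith : (2 ^ (p - 1) - 1) * h + 2 ^ (p - 1) * h = (2 ^ (p + 1 - 1) - 1) * h := by
            have e1 : 2 ^ (p - 1) - 1 + 2 ^ (p - 1) = 2 ^ (p + 1 - 1) - 1 := by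
              have h1 : 1 ≤ 2 ^ (p - 1) := Nat.one_le_two_pow
              have h2 : 2 ^ (p + 1 - 1) = 2 ^ (p - 1) * 2 := by
                rw [← pow_succ]
                congr 1
                omega
              omega
            calc (2 ^ (p - 1) - 1) * h + 2 ^ (p - 1) * h
                = (2 ^ (p - 1) - 1 + 2 ^ (p - 1)) * h := by ring
              _ = (2 ^ (p + 1 - 1) - 1) * h := by rw [e1]
          omega
    have := hsum j hj1 hj2
    omega
end

section
/- Let q be a prime power and let k, n, m be integers with 1 < k < n and m < n ≤ km. Set t = ⌊(km − n)/m⌋, a = n − (k − t − 2)m, and h = max{⌊a/2^{t+1}⌋, 1}. Then every nondegenerate [n,k]_{q^m/q} rank-metric code C satisfies |WS(C)| ≤ m − h + 1. -/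
section Aux

open Module Submodule

variable {K : Type*} [Field K] {L : Type*} [Field L] [Algebra K L] {n : ℕ}

lemma rankWeight_le [FiniteDimensional K L] (v : Fin n → L) :
    rankWeight K v ≤ Module.finrank K L := Submodule.finrank_le _

lemma rankWeight_pos [FiniteDimensional K L] {v : Fin n → L} (hv : v ≠ 0) :
    1 ≤ rankWeight K v := by
  have hne : Submodule.span K (Set.range v) ≠ ⊥ := by
    simp only [ne_eq, Submodule.span_eq_bot, not_forall]
    obtain ⟨j, hj⟩ := Function.ne_iff.mp hv
    exact ⟨v j, Set.mem_range_self j, hj⟩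
  have := Submodule.nontrivial_iff_ne_bot.mpr hne
  exact Module.finrank_pos

lemma rankWeight_add_le [FiniteDimensional K L] (v w : Fin n → L) :
    rankWeight K (v + w) ≤ rankWeight K v + rankWeight K w := by
  have h : Submodule.span K (Set.range (v + w)) ≤
      Submodule.span K (Set.range v) ⊔ Submodule.span K (Set.range w) := by
    rw [Submodule.span_le]
    rintro x ⟨j, rfl⟩
    exact Submodule.add_mem_sup (Submodule.subset_span ⟨j, rfl⟩) (Submodule.subset_span ⟨j, rfl⟩)
  calc rankWeight K (v + w) ≤ Module.finrank K ↥(Submodule.span K (Set.range v) ⊔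
        Submodule.span K (Set.range w)) := Submodule.finrank_mono h
    _ ≤ _ := Submodule.finrank_add_le_finrank_add_finrank _ _

lemma rankWeight_smul_le [FiniteDimensional K L] (μ : L) (v : Fin n → L) :
    rankWeight K (μ • v) ≤ rankWeight K v := by
  have h : Set.range (μ • v) = (LinearMap.mulLeft K μ) '' Set.range v := by
    ext x; simp [LinearMap.mulLeft_apply, Pi.smul_apply, smul_eq_mul]
  unfold rankWeight
  rw [h, ← Submodule.map_span]
  exact Submodule.finrank_map_le _ _

lemma rankWeight_zero [FiniteDimensional K L] : rankWeight K (0 : Fin n → L) = 0 := by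
  unfold rankWeight
  have h0 : Set.range (0 : Fin n → L) ⊆ {0} := by rintro x ⟨j, hj⟩; simp [← hj]
  have h1 : Submodule.span K (Set.range (0 : Fin n → L)) ≤ ⊥ := by
    rw [Submodule.span_le]; simpa using h0
  rw [le_bot_iff.mp h1]; simp

lemma rankWeight_sum_smul_le [FiniteDimensional K L] {ι : Type*} (s : Finset ι)
    (μ : ι → L) (c : ι → Fin n → L) :
    rankWeight K (∑ i ∈ s, μ i • c i) ≤ ∑ i ∈ s, rankWeight K (c i) := by
  classical
  induction s using Finset.induction with
  | empty => simp [rankWeight_zero]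
  | insert a s' hx ih =>
    rw [Finset.sum_insert hx, Finset.sum_insert hx]
    exact le_trans (rankWeight_add_le _ _)
      (Nat.add_le_add (rankWeight_smul_le _ _) ih)

/-- Codewords whose weights form a "super-increasing chain" are linearly independent. -/
lemma chain_linearIndependent [FiniteDimensional K L] {r : ℕ} (c : ℕ → Fin n → L) (v : ℕ → ℕ)
    (hw : ∀ i < r, rankWeight K (c i) = v i)
    (hchain : ∀ i < r, ∑ i' ∈ Finset.range i, v i' < v i) :
    LinearIndependent L (fun i : Fin r => c i) := by
  classical
  rw [linearIndependent_iff']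
  intro s g hsum i hi
  by_contra hgi
  set t := s.filter (fun j => g j ≠ 0) with ht
  have hts : t.Nonempty := ⟨i, by simp [ht, hi, hgi]⟩
  obtain ⟨i0, hi0t, hmax⟩ := t.exists_max_image id hts
  have hgi0 : g i0 ≠ 0 := (Finset.mem_filter.mp hi0t).2
  have hsum' : ∑ j ∈ t, g j • c (j : ℕ) = 0 := by
    rw [← hsum, ht]
    exact Finset.sum_filter_of_ne (fun j _ h hg => h (by rw [hg, zero_smul]))
  have hexpr : c (i0 : ℕ) = ∑ j ∈ t.erase i0, (-(g i0)⁻¹ * g j) • c (j : ℕ) := by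
    have h2 : g i0 • c (i0 : ℕ) + ∑ j ∈ t.erase i0, g j • c (j : ℕ) = 0 := by
      rw [← Finset.add_sum_erase _ (fun j => g j • c (j : ℕ)) hi0t] at hsum'; exact hsum'
    have h3 : g i0 • c (i0 : ℕ) = -∑ j ∈ t.erase i0, g j • c (j : ℕ) :=
      eq_neg_of_add_eq_zero_left h2
    calc c (i0 : ℕ) = (g i0)⁻¹ • (g i0 • c (i0 : ℕ)) := by
          rw [smul_smul, inv_mul_cancel₀ hgi0, one_smul]
      _ = (g i0)⁻¹ • (-∑ j ∈ t.erase i0, g j • c (j : ℕ)) := by rw [h3]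
      _ = ∑ j ∈ t.erase i0, (-(g i0)⁻¹ * g j) • c (j : ℕ) := by
          rw [smul_neg, Finset.smul_sum, ← Finset.sum_neg_distrib]
          refine Finset.sum_congr rfl fun j _ => ?_
          simp [smul_smul, neg_smul, neg_mul]
  have hb1 : rankWeight K (c (i0 : ℕ)) ≤ ∑ j ∈ t.erase i0, rankWeight K (c (j : ℕ)) := by
    rw [hexpr]; exact rankWeight_sum_smul_le _ _ _
  have hb2 : ∑ j ∈ t.erase i0, rankWeight K (c (j : ℕ)) = ∑ j ∈ t.erase i0, v (j : ℕ) :=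
    Finset.sum_congr rfl fun j _ => hw _ j.isLt
  have hb3 : ∑ j ∈ t.erase i0, v (j : ℕ) ≤ ∑ i' ∈ Finset.range (i0 : ℕ), v i' := by
    have himg : ∑ j ∈ t.erase i0, v (j : ℕ) = ∑ x ∈ (t.erase i0).image Fin.val, v x :=
      (Finset.sum_image (fun x _ y _ h => Fin.val_injective h)).symm
    rw [himg]
    refine Finset.sum_le_sum_of_subset ?_
    intro x hx
    simp only [Finset.mem_image] at hx
    obtain ⟨j, hj, rfl⟩ := hx
    have hjne := Finset.ne_of_mem_erase hj
    have hjt := Finset.mem_of_mem_erase hj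
    have := hmax j hjt
    simp only [id] at this
    exact Finset.mem_range.mpr
      (show (j : ℕ) < (i0 : ℕ) from Fin.lt_iff_val_lt_val.mp (lt_of_le_of_ne this hjne))
  have hfin : v (i0 : ℕ) < v (i0 : ℕ) := by
    calc v (i0 : ℕ) = rankWeight K (c (i0 : ℕ)) := (hw _ i0.isLt).symm
      _ ≤ _ := hb1
      _ = _ := hb2
      _ ≤ _ := hb3
      _ < v (i0 : ℕ) := hchain _ i0.isLt
  exact absurd hfin (lt_irrefl _)

/-- The K-linear map `x ↦ ∑ j, x j • b j` for a fixed vector `b`. -/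
noncomputable def pairMap (K : Type*) [Field K] {L : Type*} [Field L] [Algebra K L] {n : ℕ}
    (b : Fin n → L) : (Fin n → K) →ₗ[K] L where
  toFun x := ∑ j, x j • b j
  map_add' x y := by simp [add_smul, Finset.sum_add_distrib]
  map_smul' k x := by simp [Finset.smul_sum, mul_smul]

lemma pairMap_mem (b : Fin n → L) (x : Fin n → K) :
    pairMap K b x ∈ Submodule.span K (Set.range b) := by
  show ∑ j, x j • b j ∈ _
  exact Submodule.sum_mem _ fun j _ =>
    Submodule.smul_mem _ _ (Submodule.subset_span (Set.mem_range_self j))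

/-- If a finite family spans (a superset of) a nondegenerate code `C`, then `n` is at most
the sum of the rank weights of the family. -/
lemma nondeg_le_sum_rankWeight [FiniteDimensional K L] (C : Submodule L (Fin n → L))
    (hnd : IsNondegenerate K C) {ι : Type*} [Fintype ι] (b : ι → Fin n → L)
    (hspan : ∀ c ∈ C, c ∈ Submodule.span L (Set.range b)) :
    n ≤ ∑ i, rankWeight K (b i) := by
  classical
  set V : ι → Submodule K L := fun i => Submodule.span K (Set.range (b i)) with hV
  set Φ : (Fin n → K) →ₗ[K] (∀ i, V i) :=
    LinearMap.pi (fun i => (pairMap K (b i)).codRestrict (V i) (pairMap_mem (b i))) with hΦ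
  have hinj : Function.Injective Φ := by
    rw [← LinearMap.ker_eq_bot, eq_bot_iff]
    intro x hx
    simp only [LinearMap.mem_ker] at hx
    by_contra hx0
    have hx0' : x ≠ 0 := by simpa using hx0
    obtain ⟨c, hcC, hc⟩ := hnd x hx0'
    have hc' := hspan c hcC
    rw [mem_span_range_iff_exists_fun] at hc'
    obtain ⟨μ, hμ⟩ := hc'
    apply hc
    have hzero : ∀ i, ∑ j, x j • b i j = 0 := by
      intro i
      have h3 : ((pairMap K (b i)).codRestrict (V i) (pairMap_mem (b i))) x = 0 := congrFun hx i
      exact congrArg Subtype.val h3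
    calc ∑ j, x j • c j = ∑ j, x j • (∑ i, μ i • b i j) := by
          refine Finset.sum_congr rfl fun j _ => ?_
          rw [← hμ]; simp
      _ = ∑ j, ∑ i, μ i • (x j • b i j) := by
          refine Finset.sum_congr rfl fun j _ => ?_
          rw [Finset.smul_sum]
          exact Finset.sum_congr rfl fun i _ => (smul_comm _ _ _)
      _ = ∑ i, μ i • (∑ j, x j • b i j) := by
          rw [Finset.sum_comm]
          exact Finset.sum_congr rfl fun i _ => (Finset.smul_sum).symm
      _ = 0 := by simp [hzero]
  have h1 : Module.finrank K (Fin n → K) ≤ Module.finrank K (∀ i, V i) :=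
    LinearMap.finrank_le_finrank_of_injective hinj
  rw [Module.finrank_pi, Module.finrank_pi_fintype] at h1
  simp at h1; exact h1

/-- Main algebraic bound : a super-increasing chain of `r` weights in a nondegenerate code
gives `r ≤ k` and `n ≤ (sum of the chain) + (k - r) * m`. -/
lemma factF [FiniteDimensional K L] (C : Submodule L (Fin n → L)) (hnd : IsNondegenerate K C)
    {k r : ℕ} (hdim : Module.finrank L C = k)
    (c : ℕ → Fin n → L) (v : ℕ → ℕ)
    (hmem : ∀ i < r, c i ∈ C) (hw : ∀ i < r, rankWeight K (c i) = v i)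
    (hchain : ∀ i < r, ∑ i' ∈ Finset.range i, v i' < v i) :
    r ≤ k ∧ n ≤ (∑ i ∈ Finset.range r, v i) + (k - r) * Module.finrank K L := by
  classical
  have li : LinearIndependent L (fun i : Fin r => c i) :=
    chain_linearIndependent c v hw hchain
  set c' : Fin r → C := fun i => ⟨c i, hmem i i.isLt⟩ with hc'
  have li' : LinearIndependent L c' := LinearIndependent.of_comp C.subtype li
  have hrk : r ≤ k := by
    have := li'.fintype_card_le_finrank
    rwa [Fintype.card_fin, hdim] at this
  have hsub : LinearIndepOn L id (Set.range c') := (linearIndepOn_id_range_iff li'.injective).mpr li'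
  set B := Basis.extend hsub with hB
  haveI : Fintype ↑(hsub.extend (Set.subset_univ _)) := FiniteDimensional.fintypeBasisIndex B
  have hcard : Fintype.card ↑(hsub.extend (Set.subset_univ _)) = k := by
    rw [← hdim, Module.finrank_eq_card_basis B]
  set b : ↑(hsub.extend (Set.subset_univ _)) → (Fin n → L) := fun x => ((B x : C) : Fin n → L)
    with hb
  have hspan : ∀ cc ∈ C, cc ∈ Submodule.span L (Set.range b) := by
    intro cc hcc
    have hy : (⟨cc, hcc⟩ : C) ∈ Submodule.span L (Set.range ⇑B) := by
      rw [B.span_eq]; trivial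
    have : cc ∈ Submodule.map C.subtype (Submodule.span L (Set.range ⇑B)) :=
      ⟨⟨cc, hcc⟩, hy, rfl⟩
    rwa [Submodule.map_span, ← Set.range_comp] at this
  have main : n ≤ ∑ x, rankWeight K (b x) := nondeg_le_sum_rankWeight C hnd b hspan
  set emb : Fin r → ↑(hsub.extend (Set.subset_univ _)) :=
    fun i => ⟨c' i, Basis.subset_extend hsub (Set.mem_range_self i)⟩ with hemb
  have hembinj : Function.Injective emb := by
    intro i j hij
    exact li'.injective (Subtype.ext_iff.mp hij)
  have hbe : ∀ i, b (emb i) = c i := by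
    intro i
    show ((B (emb i) : C) : Fin n → L) = c i
    rw [Basis.extend_apply_self]
  set img := Finset.univ.image emb with himg
  have hsplit : ∑ x, rankWeight K (b x)
      = ∑ x ∈ Finset.univ \ img, rankWeight K (b x) + ∑ x ∈ img, rankWeight K (b x) :=
    (Finset.sum_sdiff (Finset.subset_univ img)).symm
  have h1 : ∑ x ∈ img, rankWeight K (b x) = ∑ i ∈ Finset.range r, v i := by
    rw [Finset.sum_image (fun x _ y _ h => hembinj h)]
    rw [← Fin.sum_univ_eq_sum_range]
    exact Finset.sum_congr rfl fun i _ => by rw [hbe i]; exact hw i i.isLt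
  have h2 : ∑ x ∈ Finset.univ \ img, rankWeight K (b x) ≤ (k - r) * Module.finrank K L := by
    calc ∑ x ∈ Finset.univ \ img, rankWeight K (b x)
        ≤ (Finset.univ \ img).card * Module.finrank K L := by
          rw [← smul_eq_mul]
          exact Finset.sum_le_card_nsmul _ _ _ (fun x _ => rankWeight_le (b x))
      _ = (k - r) * Module.finrank K L := by
          congr 1
          rw [Finset.card_sdiff_of_subset (Finset.subset_univ img), Finset.card_univ, hcard,
            Finset.card_image_of_injective _ hembinj, Finset.card_univ, Fintype.card_fin]
  refine ⟨hrk, ?_⟩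
  calc n ≤ ∑ x, rankWeight K (b x) := main
    _ = _ := hsplit
    _ ≤ (k - r) * Module.finrank K L + ∑ i ∈ Finset.range r, v i := by
        rw [h1]; exact Nat.add_le_add_right h2 _
    _ = (∑ i ∈ Finset.range r, v i) + (k - r) * Module.finrank K L := Nat.add_comm _ _

end Aux


/-- The purely combinatorial engine: a finite set of "weights" in `[1,m]` satisfying the
chain-sum bound `F` cannot be too large. -/
lemma engine (m k t a h n : ℕ) (T : Finset ℕ) (hsub : T ⊆ Finset.Icc 1 m)
    (hh2 : 2 ≤ h) (hha : 2 ^ (t + 1) * h ≤ a) (ha2m : a ≤ 2 * m)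
    (hna : a ≤ n) (hnD : n = a + (k - (t + 2)) * m)
    (hcard : m - h + 2 ≤ T.card)
    (F : ∀ v : ℕ → ℕ, (∀ i < t + 2, v i ∈ T) →
      (∀ i < t + 2, ∑ i' ∈ Finset.range i, v i' < v i) →
      n ≤ (∑ i ∈ Finset.range (t + 2), v i) + (k - (t + 2)) * m) :
    False := by
  classical
  -- basic counts
  have hm1 : 1 ≤ m := by
    have := hha; have := ha2m
    have h1 : 1 ≤ h := by omega
    nlinarith [Nat.one_le_two_pow (n := t + 1)]
  have hmisscard : (Finset.Icc 1 m \ T).card + T.card = m := by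
    have := Finset.card_sdiff_add_card_eq_card hsub
    rwa [Nat.card_Icc] at this
  have hTle : T.card ≤ m := by omega
  have hmiss : (Finset.Icc 1 m \ T).card + 2 ≤ h := by omega
  have hth : 2 ^ t * h ≤ m := by
    have h1 : 2 ^ t * h * 2 ≤ a := by
      rw [pow_succ] at hha; rw [mul_right_comm]; exact hha
    have h2 : 2 ^ t * h * 2 ≤ m * 2 := by linarith
    exact Nat.le_of_mul_le_mul_right h2 (by norm_num)
  -- the state invariant
  set State : ℕ → Prop := fun j => ∃ v : ℕ → ℕ,
    (∀ i < j, v i ∈ T) ∧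
    (∀ i < j, ∑ i' ∈ Finset.range i, v i' < v i) ∧
    ((∑ i ∈ Finset.range j, v i) + 1
      ≤ 2 ^ j + 2 ^ (j - 1) * (Finset.Icc 1 (min (∑ i ∈ Finset.range j, v i) m) \ T).card) ∧
    ((T ∩ Finset.Icc 1 (∑ i ∈ Finset.range j, v i)).card + h ≤ 2 ^ (j - 1) * h + 1)
    with hState
  -- base case
  have hTne : T.Nonempty := Finset.card_pos.mp (by omega)
  have base : State 1 := by
    set v1 := T.min' hTne with hv1
    have hv1T : v1 ∈ T := T.min'_mem hTne
    have hv1Icc := hsub hv1T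
    rw [Finset.mem_Icc] at hv1Icc
    refine ⟨fun _ => v1, fun i _ => hv1T, ?_, ?_, ?_⟩
    · intro i hi
      interval_cases i
      simp only [Finset.range_zero, Finset.sum_empty]; exact hv1Icc.1
    · have hminv : min v1 m = v1 := min_eq_left hv1Icc.2
      have hBsub : Finset.Icc 1 (v1 - 1) ⊆ Finset.Icc 1 (min v1 m) \ T := by
        intro x hx
        rw [Finset.mem_Icc] at hx
        rw [Finset.mem_sdiff, Finset.mem_Icc, hminv]
        refine ⟨⟨hx.1, by omega⟩, fun hxT => ?_⟩
        have := T.min'_le x hxT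
        omega
      have hB : v1 - 1 ≤ (Finset.Icc 1 (min (∑ i ∈ Finset.range 1, v1) m) \ T).card := by
        have := Finset.card_le_card hBsub
        rw [Nat.card_Icc] at this
        simpa using this
      simp only [Finset.sum_range_one] at hB ⊢
      omega
    · have hu : T ∩ Finset.Icc 1 v1 ⊆ {v1} := by
        intro x hx
        rw [Finset.mem_inter, Finset.mem_Icc] at hx
        have := T.min'_le x hx.1
        rw [Finset.mem_singleton]
        omega
      have hcu := Finset.card_le_card hu
      rw [Finset.card_singleton] at hcu
      simp only [Finset.sum_range_one, pow_zero, one_mul]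
      omega
  -- step
  have step : ∀ j, 1 ≤ j → j ≤ t + 1 → State j → State (j + 1) := by
    intro j hj1 hjt hSj
    obtain ⟨j', rfl⟩ : ∃ j', j = j' + 1 := ⟨j - 1, by omega⟩
    obtain ⟨v, hvT, hvchain, hI, hII⟩ := hSj
    set S := ∑ i ∈ Finset.range (j' + 1), v i with hSdef
    -- S ≤ 2^j' * h - 1  (in no-subtraction form : S + 1 ≤ 2^j' * h)
    have hBle : (Finset.Icc 1 (min S m) \ T).card ≤ (Finset.Icc 1 m \ T).card := by
      apply Finset.card_le_card
      intro x hx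
      rw [Finset.mem_sdiff, Finset.mem_Icc] at hx ⊢
      exact ⟨⟨hx.1.1, le_trans hx.1.2 (min_le_right _ _)⟩, hx.2⟩
    have hSh : S + 1 ≤ 2 ^ j' * h := by
      have h1 : S + 1 ≤ 2 ^ (j' + 1) + 2 ^ j' * ((Finset.Icc 1 m \ T).card) := by
        have := hI
        simp only [Nat.add_sub_cancel] at this
        calc S + 1 ≤ 2 ^ (j' + 1) + 2 ^ j' * (Finset.Icc 1 (min S m) \ T).card := this
          _ ≤ _ := by
              exact Nat.add_le_add_left (Nat.mul_le_mul_left _ hBle) _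
      calc S + 1 ≤ 2 ^ (j' + 1) + 2 ^ j' * ((Finset.Icc 1 m \ T).card) := h1
        _ ≤ 2 ^ (j' + 1) + 2 ^ j' * (h - 2) := Nat.add_le_add_left
            (Nat.mul_le_mul_left _ (by omega)) _
        _ = 2 ^ j' * 2 + 2 ^ j' * (h - 2) := by rw [pow_succ]
        _ = 2 ^ j' * (2 + (h - 2)) := by rw [Nat.mul_add]
        _ = 2 ^ j' * h := by congr 1; omega
    -- there is an element of T above S, else contradiction
    have hexists : ∃ x ∈ T, S < x := by
      by_contra hno
      push_neg at hno
      have hTsub : T ⊆ T ∩ Finset.Icc 1 S := by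
        intro x hxT
        rw [Finset.mem_inter]
        have := hsub hxT
        rw [Finset.mem_Icc] at this
        exact ⟨hxT, Finset.mem_Icc.mpr ⟨this.1, hno x hxT⟩⟩
      have hcard2 : T.card ≤ (T ∩ Finset.Icc 1 S).card := Finset.card_le_card hTsub
      have h3 : T.card + h ≤ 2 ^ j' * h + 1 := by
        have := hII
        simp only [Nat.add_sub_cancel] at this
        omega
      have h4 : 2 ^ j' * h ≤ 2 ^ t * h := Nat.mul_le_mul_right _ (Nat.pow_le_pow_right (by norm_num) (by omega))
      omega
    set cand := T.filter (fun x => S < x) with hcand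
    have hcandne : cand.Nonempty := by
      obtain ⟨x, hxT, hxS⟩ := hexists
      exact ⟨x, by rw [hcand, Finset.mem_filter]; exact ⟨hxT, hxS⟩⟩
    set w := cand.min' hcandne with hw
    have hwcand : w ∈ cand := cand.min'_mem hcandne
    have hwT : w ∈ T := (Finset.mem_filter.mp hwcand).1
    have hSw : S < w := (Finset.mem_filter.mp hwcand).2
    have hwmin : ∀ x ∈ T, S < x → w ≤ x := by
      intro x hxT hxS
      exact cand.min'_le x (by rw [hcand, Finset.mem_filter]; exact ⟨hxT, hxS⟩)
    have hwm : w ≤ m := by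
      have := hsub hwT; rw [Finset.mem_Icc] at this; exact this.2
    -- the new sequence
    set v' : ℕ → ℕ := Function.update v (j' + 1) w with hv'
    have hv'old : ∀ i < j' + 1, v' i = v i := by
      intro i hi
      rw [hv', Function.update_of_ne (by omega)]
    have hv'new : v' (j' + 1) = w := by rw [hv', Function.update_self]
    have hsumold : ∀ i ≤ j' + 1, ∑ i' ∈ Finset.range i, v' i' = ∑ i' ∈ Finset.range i, v i' := by
      intro i hi
      refine Finset.sum_congr rfl fun x hx => ?_
      rw [Finset.mem_range] at hx
      exact hv'old x (by omega)
    have hS' : ∑ i ∈ Finset.range (j' + 2), v' i = S + w := by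
      rw [Finset.sum_range_succ, hsumold (j' + 1) le_rfl, hv'new]
    refine ⟨v', ?_, ?_, ?_, ?_⟩
    · intro i hi
      rcases Nat.lt_or_ge i (j' + 1) with h | h
      · rw [hv'old i h]; exact hvT i h
      · have : i = j' + 1 := by omega
        rw [this, hv'new]; exact hwT
    · intro i hi
      rcases Nat.lt_or_ge i (j' + 1) with h | h
      · rw [hv'old i h, hsumold i (by omega)]; exact hvchain i h
      · have hieq : i = j' + 1 := by omega
        rw [hieq, hv'new, hsumold (j' + 1) le_rfl]
        exact hSw
    · -- invariant I
      rw [hS']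
      simp only [Nat.add_sub_cancel]
      set g := w - S - 1 with hg
      set B := (Finset.Icc 1 (min S m) \ T).card with hB
      set B' := (Finset.Icc 1 (min (S + w) m) \ T).card with hB'
      have hminS : min S m = S := min_eq_left (by omega)
      have hBB' : B + g ≤ B' := by
        have hdisj : Disjoint (Finset.Icc 1 (min S m) \ T) (Finset.Icc (S + 1) (w - 1)) := by
          rw [Finset.disjoint_left]
          intro x hx hx2
          rw [Finset.mem_sdiff, Finset.mem_Icc, hminS] at hx
          rw [Finset.mem_Icc] at hx2
          omega
        have hsub2 : (Finset.Icc 1 (min S m) \ T) ∪ Finset.Icc (S + 1) (w - 1)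
            ⊆ Finset.Icc 1 (min (S + w) m) \ T := by
          intro x hx
          rw [Finset.mem_union] at hx
          rw [Finset.mem_sdiff, Finset.mem_Icc, le_min_iff]
          rcases hx with hx | hx
          · rw [Finset.mem_sdiff, Finset.mem_Icc, hminS] at hx
            exact ⟨⟨hx.1.1, by omega, by omega⟩, hx.2⟩
          · rw [Finset.mem_Icc] at hx
            refine ⟨⟨by omega, by omega, by omega⟩, fun hxT => ?_⟩
            have := hwmin x hxT (by omega)
            omega
        have := Finset.card_le_card hsub2
        rw [Finset.card_union_of_disjoint hdisj, Nat.card_Icc] at this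
        have hgcard : w - 1 + 1 - (S + 1) = g := by omega
        rw [hgcard] at this
        exact this
      have hIold : S + 1 ≤ 2 ^ (j' + 1) + 2 ^ j' * B := by
        have := hI; simp only [Nat.add_sub_cancel] at this; exact this
      have hweq : w = S + 1 + g := by omega
      -- goal : S + w + 1 ≤ 2^(j'+2) + 2^(j'+1) * B'
      have hkey : S + w + 1 = (S + 1) + (S + 1) + g := by omega
      calc S + w + 1 = (S + 1) + (S + 1) + g := hkey
        _ ≤ (2 ^ (j' + 1) + 2 ^ j' * B) + (2 ^ (j' + 1) + 2 ^ j' * B) + g := by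
            exact Nat.add_le_add (Nat.add_le_add hIold hIold) le_rfl
        _ = 2 ^ (j' + 2) + (2 ^ j' * B + 2 ^ j' * B + g) := by ring_nf
        _ ≤ 2 ^ (j' + 2) + (2 ^ (j' + 1) * B + 2 ^ (j' + 1) * g) := by
            have e1 : 2 ^ j' * B + 2 ^ j' * B = 2 ^ (j' + 1) * B := by ring
            have e2 : g ≤ 2 ^ (j' + 1) * g := Nat.le_mul_of_pos_left g (Nat.pow_pos (by norm_num))
            omega
        _ = 2 ^ (j' + 2) + 2 ^ (j' + 1) * (B + g) := by rw [Nat.mul_add]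
        _ ≤ 2 ^ (j' + 2) + 2 ^ (j' + 1) * B' := Nat.add_le_add_left (Nat.mul_le_mul_left _ hBB') _
    · -- invariant II
      rw [hS']
      simp only [Nat.add_sub_cancel]
      set u := (T ∩ Finset.Icc 1 S).card with hu
      have huold : u + h ≤ 2 ^ j' * h + 1 := by
        have := hII; simp only [Nat.add_sub_cancel] at this; exact this
      have hu' : (T ∩ Finset.Icc 1 (S + w)).card ≤ u + 1 + S := by
        have hsub3 : T ∩ Finset.Icc 1 (S + w) ⊆
            (T ∩ Finset.Icc 1 S) ∪ ({w} ∪ Finset.Icc (w + 1) (S + w)) := by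
          intro x hx
          rw [Finset.mem_inter, Finset.mem_Icc] at hx
          rw [Finset.mem_union, Finset.mem_union, Finset.mem_inter, Finset.mem_Icc,
            Finset.mem_singleton, Finset.mem_Icc]
          rcases Nat.lt_or_ge S x with h | h
          · have := hwmin x hx.1 h
            omega
          · exact Or.inl ⟨hx.1, hx.2.1, h⟩
        have hc := Finset.card_le_card hsub3
        calc (T ∩ Finset.Icc 1 (S + w)).card
            ≤ ((T ∩ Finset.Icc 1 S) ∪ ({w} ∪ Finset.Icc (w + 1) (S + w))).card := hc
          _ ≤ u + ({w} ∪ Finset.Icc (w + 1) (S + w)).card := by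
              have := Finset.card_union_le (T ∩ Finset.Icc 1 S) ({w} ∪ Finset.Icc (w + 1) (S + w))
              omega
          _ ≤ u + (1 + (Finset.Icc (w + 1) (S + w)).card) := by
              have := Finset.card_union_le ({w} : Finset ℕ) (Finset.Icc (w + 1) (S + w))
              simp only [Finset.card_singleton] at this
              omega
          _ = u + 1 + S := by rw [Nat.card_Icc]; omega
      calc (T ∩ Finset.Icc 1 (S + w)).card + h ≤ (u + h) + (S + 1) := by omega
        _ ≤ (2 ^ j' * h + 1) + 2 ^ j' * h := Nat.add_le_add huold hSh
        _ = 2 ^ (j' + 1) * h + 1 := by ring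
  -- iterate the step
  have iter : ∀ d, d ≤ t + 1 → State (1 + d) := by
    intro d
    induction d with
    | zero => intro _; exact base
    | succ d ih =>
        intro hd
        have hS := ih (by omega)
        have := step (1 + d) (by omega) (by omega) hS
        rwa [show 1 + d + 1 = 1 + (d + 1) by omega] at this
  have hfinal : State (t + 2) := by
    have := iter (t + 1) le_rfl
    rwa [show 1 + (t + 1) = t + 2 by omega] at this
  -- final contradiction via F
  obtain ⟨v, hvT, hvchain, hI, _⟩ := hfinal
  rw [show t + 2 - 1 = t + 1 from rfl] at hI
  have hBle : (Finset.Icc 1 (min (∑ i ∈ Finset.range (t + 2), v i) m) \ T).card ≤ h - 2 := by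
    have hmono : (Finset.Icc 1 (min (∑ i ∈ Finset.range (t + 2), v i) m) \ T).card
        ≤ (Finset.Icc 1 m \ T).card := by
      apply Finset.card_le_card
      intro x hx
      rw [Finset.mem_sdiff, Finset.mem_Icc] at hx ⊢
      exact ⟨⟨hx.1.1, le_trans hx.1.2 (min_le_right _ _)⟩, hx.2⟩
    omega
  have hSa : (∑ i ∈ Finset.range (t + 2), v i) + 1 ≤ a := by
    calc (∑ i ∈ Finset.range (t + 2), v i) + 1
        ≤ 2 ^ (t + 2) + 2 ^ (t + 1)
            * (Finset.Icc 1 (min (∑ i ∈ Finset.range (t + 2), v i) m) \ T).card := hI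
      _ ≤ 2 ^ (t + 2) + 2 ^ (t + 1) * (h - 2) :=
          Nat.add_le_add_left (Nat.mul_le_mul_left _ hBle) _
      _ = 2 ^ (t + 1) * 2 + 2 ^ (t + 1) * (h - 2) := by rw [pow_succ]
      _ = 2 ^ (t + 1) * (2 + (h - 2)) := by rw [Nat.mul_add]
      _ = 2 ^ (t + 1) * h := by congr 1; omega
      _ ≤ a := hha
  have hF := F v hvT hvchain
  omega

/-- Theorem (upper bound, case n > m): every nondegenerate [n,k]_{q^m/q} code has at most
m − h + 1 distinct nonzero rank weights, where t = ⌊(km−n)/m⌋, a = n − (k−t−2)m and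
h = max{⌊a/2^{t+1}⌋, 1}. -/

theorem weightSpectrum_ncard_le_of_gt (q m n k t a h : ℕ) (hq : IsPrimePow q)
    (hk : 1 < k) (hkn : k < n) (hmn : m < n) (hkm : n ≤ k * m)
    (ht : t = (k * m - n) / m) (ha : a = n - (k - t - 2) * m)
    (hh : h = max (a / 2 ^ (t + 1)) 1)
    (K L : Type) [Field K] [Fintype K] [Field L] [Algebra K L]
    (hcard : Fintype.card K = q) (hdeg : Module.finrank K L = m)
    (C : Submodule L (Fin n → L)) (hdim : Module.finrank L C = k)
    (hnd : IsNondegenerate K C) :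
    (weightSpectrum K C).ncard ≤ m - h + 1 := by
  classical
  have hm0 : 0 < m := by
    rcases Nat.eq_zero_or_pos m with hm | hm
    · subst hm; simp at hkm; omega
    · exact hm
  haveI hFD : FiniteDimensional K L :=
    FiniteDimensional.of_finrank_pos (by rw [hdeg]; exact hm0)
  -- the weight spectrum lies in [1, m]
  have hWS : weightSpectrum K C ⊆ Set.Icc 1 m := by
    rintro w ⟨c, hcC, hc0, rfl⟩
    exact ⟨rankWeight_pos hc0, hdeg ▸ rankWeight_le c⟩
  have hfin : (weightSpectrum K C).Finite := (Set.finite_Icc 1 m).subset hWS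
  set T := hfin.toFinset with hT
  have hncard : (weightSpectrum K C).ncard = T.card := Set.ncard_eq_toFinset_card _ hfin
  have hsubT : T ⊆ Finset.Icc 1 m := by
    intro x hx
    rw [hT, Set.Finite.mem_toFinset] at hx
    exact Finset.mem_Icc.mpr (hWS hx)
  -- arithmetic consequences of the hypotheses
  have hdm : m * t + (k * m - n) % m = k * m - n := by
    rw [ht]; exact Nat.div_add_mod _ _
  have hdm' : t * m + (k * m - n) % m = k * m - n := by rw [mul_comm t m]; exact hdm
  have hrlt : (k * m - n) % m < m := Nat.mod_lt _ hm0
  have hDm : (k - (t + 2)) * m = k * m - (t * m + 2 * m) := by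
    rw [Nat.sub_mul, Nat.add_mul]
  have hkt2 : k - t - 2 = k - (t + 2) := by omega
  have ha' : a = n - (k - (t + 2)) * m := by rw [ha, hkt2]
  have hna : a ≤ n := by rw [ha']; omega
  have ha2m : a ≤ 2 * m := by rw [ha']; omega
  have hnD : n = a + (k - (t + 2)) * m := by rw [ha']; omega
  -- case split on h
  by_cases hcase : a / 2 ^ (t + 1) ≤ 1
  · have hh1 : h = 1 := by rw [hh]; exact max_eq_right hcase
    rw [hncard, hh1]
    calc T.card ≤ (Finset.Icc 1 m).card := Finset.card_le_card hsubT
      _ = m := by rw [Nat.card_Icc]; omega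
      _ ≤ m - 1 + 1 := by omega
  · push_neg at hcase
    have hheq : h = a / 2 ^ (t + 1) := by rw [hh]; exact max_eq_left (le_of_lt hcase)
    have hha : 2 ^ (t + 1) * h ≤ a := by
      rw [hheq, mul_comm]; exact Nat.div_mul_le_self a _
    by_contra hcon
    push_neg at hcon
    have hcard : m - h + 2 ≤ T.card := by rw [hncard] at hcon; omega
    refine engine m k t a h n T hsubT (by omega) hha ha2m hna hnD hcard ?_
    intro v hvT hvchain
    have hchoose : ∀ w ∈ T, ∃ c, c ∈ C ∧ c ≠ 0 ∧ rankWeight K c = w := by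
      intro w hw
      rw [hT, Set.Finite.mem_toFinset] at hw
      obtain ⟨c, hcC, hc0, hcw⟩ := hw
      exact ⟨c, hcC, hc0, hcw⟩
    set cf : ℕ → (Fin n → L) :=
      fun i => if hi : i < t + 2 then (hchoose (v i) (hvT i hi)).choose else 0 with hcf
    have hcfC : ∀ i < t + 2, cf i ∈ C := by
      intro i hi
      simp only [hcf, dif_pos hi]
      exact (hchoose (v i) (hvT i hi)).choose_spec.1
    have hcfw : ∀ i < t + 2, rankWeight K (cf i) = v i := by
      intro i hi
      simp only [hcf, dif_pos hi]
      exact (hchoose (v i) (hvT i hi)).choose_spec.2.2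
    have hFF := factF C hnd hdim cf v hcfC hcfw hvchain
    rw [hdeg] at hFF
    exact hFF.2
end
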